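/- arXiv:2108.01868 — 11 statements merged into one kernel-verified Lean document; each statement's English description precedes it below -/
import Mathlib

section
/- Let R be a local domain with fraction field K. The collection of sets {αR + β : α ∈ K×, β ∈ K} forms a basis of open sets for a non-discrete Hausdorff ring topology on K in which multiplication by any nonzero element and translation by any element are homeomorphisms. -/
/-- For a local domain `R` with fraction field `K`, the collection of sets
`{αR + β : α ∈ Kˣ, β ∈ K}` is a basis for a non-discrete Hausdorff ring topology on `K`
in which `x ↦ αx + β` (for `α ≠ 0`) is a homeomorphism. -/
theorem stmt0 (R K : Type*) [CommRing R] [IsDomain R] [IsLocalRing R] (hR : ¬ IsField R)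
    [Field K] [Algebra R K] [IsFractionRing R K] :
    ∃ τ : TopologicalSpace K,
      @TopologicalSpace.IsTopologicalBasis K τ
        {U : Set K | ∃ α β : K, α ≠ 0 ∧
          U = {x : K | ∃ r : R, x = α * algebraMap R K r + β}} ∧
      @IsTopologicalRing K τ _ ∧ @T2Space K τ ∧ ¬ @DiscreteTopology K τ ∧
      ∀ α β : K, α ≠ 0 → @IsHomeomorph K K τ τ (fun x => α * x + β) := by
  classical
  set f := algebraMap R K with hf_def
  have hf : Function.Injective f := IsFractionRing.injective R K
  -- the additive subgroups αR
  let B : {α : K // α ≠ 0} → AddSubgroup K := fun α =>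
    { carrier := {x : K | ∃ r : R, x = α.1 * f r}
      zero_mem' := ⟨0, by simp⟩
      add_mem' := by
        rintro x y ⟨r, rfl⟩ ⟨s, rfl⟩
        exact ⟨r + s, by rw [map_add]; ring⟩
      neg_mem' := by
        rintro x ⟨r, rfl⟩
        exact ⟨-r, by rw [map_neg]; ring⟩ }
  have memB : ∀ (α : {α : K // α ≠ 0}) (x : K), x ∈ B α ↔ ∃ r : R, x = α.1 * f r :=
    fun α x => Iff.rfl
  -- key : common refinement
  have key : ∀ α₁ α₂ : K, α₁ ≠ 0 → α₂ ≠ 0 →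
      ∃ a b : R, α₁ * f b = α₂ * f a ∧ α₁ * f b ≠ 0 := by
    intro α₁ α₂ h₁ h₂
    obtain ⟨⟨a, b⟩, hab⟩ := IsLocalization.surj (nonZeroDivisors R) (α₁ / α₂)
    have hb : f (b : R) ≠ 0 := IsFractionRing.to_map_ne_zero_of_mem_nonZeroDivisors b.2
    refine ⟨a, b, ?_, mul_ne_zero h₁ hb⟩
    have : α₁ / α₂ * f (b : R) = f a := hab
    field_simp at this
    linear_combination this
  haveI : Nonempty {α : K // α ≠ 0} := ⟨⟨1, one_ne_zero⟩⟩
  have hB : RingSubgroupsBasis B := by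
    apply RingSubgroupsBasis.of_comm
    · -- inter
      intro i j
      obtain ⟨a, b, hab, hne⟩ := key i.1 j.1 i.2 j.2
      refine ⟨⟨i.1 * f b, hne⟩, le_inf ?_ ?_⟩
      · rintro x ⟨r, rfl⟩
        exact ⟨b * r, by rw [map_mul]; ring⟩
      · rintro x ⟨r, rfl⟩
        exact ⟨a * r, by rw [map_mul, ← mul_assoc, ← hab]⟩
    · -- mul
      intro i
      obtain ⟨a, b, hab, hne⟩ := key i.1 1 i.2 one_ne_zero
      refine ⟨⟨i.1 * f b, hne⟩, ?_⟩
      rintro _ ⟨x, ⟨r, rfl⟩, y, ⟨s, rfl⟩, rfl⟩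
      refine ⟨b * r * a * s, ?_⟩
      have : i.1 * f b = f a := by rw [hab]; ring
      rw [map_mul, map_mul, map_mul]
      calc i.1 * f b * f r * (i.1 * f b * f s)
          = i.1 * f b * f r * (f a * f s) := by rw [this]
        _ = i.1 * (f b * f r * f a * f s) := by ring
    · -- leftMul
      intro x i
      rcases eq_or_ne x 0 with hx | hx
      · exact ⟨i, fun y _ => ⟨0, by simp [hx]⟩⟩
      · refine ⟨⟨i.1 * x⁻¹, mul_ne_zero i.2 (inv_ne_zero hx)⟩, ?_⟩
        rintro _ ⟨r, rfl⟩
        refine ⟨r, ?_⟩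
        field_simp
  refine ⟨hB.topology, ?_, ?_, ?_, ?_, ?_⟩
  · -- basis
    letI := hB.topology
    apply TopologicalSpace.isTopologicalBasis_of_isOpen_of_nhds
    · rintro U ⟨α, β, hα, rfl⟩
      rw [isOpen_iff_mem_nhds]
      rintro y ⟨r₀, rfl⟩
      rw [(hB.hasBasis_nhds _).mem_iff]
      refine ⟨⟨α, hα⟩, trivial, ?_⟩
      rintro x hx
      obtain ⟨r, hr⟩ := hx
      exact ⟨r + r₀, by rw [map_add]; linear_combination hr⟩
    · intro x U hx hU
      have := hU.mem_nhds hx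
      rw [(hB.hasBasis_nhds x).mem_iff] at this
      obtain ⟨α, -, hs⟩ := this
      refine ⟨{y : K | ∃ r : R, y = α.1 * f r + x}, ⟨α.1, x, α.2, rfl⟩, ⟨0, by simp⟩, ?_⟩
      rintro y ⟨r, rfl⟩
      exact hs ⟨r, by ring⟩
  · -- topological ring
    exact hB.toRingFilterBasis.isTopologicalRing
  · -- T2
    letI := hB.topology
    haveI : IsTopologicalRing K := hB.toRingFilterBasis.isTopologicalRing
    obtain ⟨t, ht0, htm⟩ : ∃ t : R, t ≠ 0 ∧ t ∈ IsLocalRing.maximalIdeal R := by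
      have : IsLocalRing.maximalIdeal R ≠ ⊥ :=
        IsLocalRing.isField_iff_maximalIdeal_eq.not.mp hR
      obtain ⟨t, htm, ht0⟩ := Submodule.exists_mem_ne_zero_of_ne_bot this
      exact ⟨t, ht0, htm⟩
    apply IsTopologicalAddGroup.t2Space_of_zero_sep
    intro x hx
    have hft : f t ≠ 0 := fun h => ht0 (hf (by simpa using h))
    refine ⟨B ⟨x * f t, mul_ne_zero hx hft⟩, hB.hasBasis_nhds_zero.mem_of_mem trivial, ?_⟩
    rintro ⟨r, hr⟩
    have : (1 : K) = f (t * r) := by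
      rw [map_mul]
      exact mul_left_cancel₀ hx (by linear_combination hr)
    have h1 : (t * r : R) = 1 := hf (by simpa using this.symm)
    exact htm (IsUnit.of_mul_eq_one (a := t) r h1)
  · -- not discrete
    intro h
    have h0 : ({0} : Set K) ∈ @nhds K hB.topology 0 := by
      letI := hB.topology
      rw [nhds_discrete]
      exact Filter.mem_pure.2 rfl
    rw [hB.hasBasis_nhds_zero.mem_iff] at h0
    obtain ⟨α, -, hα⟩ := h0
    have : α.1 ∈ B α := ⟨1, by simp⟩
    simpa [α.2] using hα this
  · -- homeomorphisms
    intro α β hα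
    letI := hB.topology
    haveI : IsTopologicalRing K := hB.toRingFilterBasis.isTopologicalRing
    exact ((Homeomorph.mulLeft₀ α hα).trans (Homeomorph.addRight β)).isHomeomorph
end

section
/- Let R be a local domain with fraction field K, and suppose v, v* : K× → ℤ are group homomorphisms that are both non-negative on R \ {0}, and some β ∈ K× satisfies v(β) < 0 < v*(β). Then there is no c ∈ K× with the property that for all x, y ∈ K×, xy ∈ cR implies x ∈ R or y ∈ R. -/
/-- If `R` is a local domain with fraction field `K`, `v, v*` are group
homomorphisms `Kˣ → ℤ` non-negative on `R \ {0}`, and some `β ∈ Kˣ` has `v β < 0 < v* β`,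
then there is no `c ∈ Kˣ` such that `xy ∈ cR` implies `x ∈ R` or `y ∈ R`. -/
theorem stmt1 (R K : Type*) [CommRing R] [IsDomain R] [IsLocalRing R] (hR : ¬ IsField R)
    [Field K] [Algebra R K] [IsFractionRing R K]
    (v vstar : K → ℤ)
    (hv : ∀ x y : K, x ≠ 0 → y ≠ 0 → v (x * y) = v x + v y)
    (hvstar : ∀ x y : K, x ≠ 0 → y ≠ 0 → vstar (x * y) = vstar x + vstar y)
    (hvR : ∀ r : R, r ≠ 0 → 0 ≤ v (algebraMap R K r) ∧ 0 ≤ vstar (algebraMap R K r))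
    (β : K) (hβ0 : β ≠ 0) (hβ : v β < 0 ∧ 0 < vstar β) :
    ¬ ∃ c : K, c ≠ 0 ∧ ∀ x y : K, x ≠ 0 → y ≠ 0 →
        (∃ r : R, x * y = c * algebraMap R K r) →
        (∃ r : R, x = algebraMap R K r) ∨ (∃ r : R, y = algebraMap R K r) := by
  rintro ⟨c, hc0, hc⟩
  -- basic facts about v and vstar
  have h1 : ∀ (w : K → ℤ), (∀ x y : K, x ≠ 0 → y ≠ 0 → w (x * y) = w x + w y) → w 1 = 0 := by
    intro w hw
    have := hw 1 1 one_ne_zero one_ne_zero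
    simpa using this
  have hpow : ∀ (w : K → ℤ), (∀ x y : K, x ≠ 0 → y ≠ 0 → w (x * y) = w x + w y) →
      ∀ n : ℕ, w (β ^ n) = n * w β := by
    intro w hw n
    induction n with
    | zero => simpa using h1 w hw
    | succ k ih =>
      have : w (β ^ k * β) = w (β ^ k) + w β := hw _ _ (pow_ne_zero k hβ0) hβ0
      rw [← pow_succ] at this
      rw [this, ih]
      push_cast
      ring
  set n : ℕ := (vstar c).toNat + 1 with hn
  have hn1 : 1 ≤ (n : ℤ) := by simp [hn]
  have hβn : β ^ n ≠ 0 := pow_ne_zero n hβ0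
  have hvc : vstar c < (n : ℤ) * vstar β := by
    have h2 : vstar c < (n : ℤ) := by
      have := Int.self_le_toNat (vstar c)
      omega
    calc vstar c < (n : ℤ) := h2
      _ = (n : ℤ) * 1 := by ring
      _ ≤ (n : ℤ) * vstar β := by
          apply mul_le_mul_of_nonneg_left _ (by positivity)
          omega
  have hy0 : c * (β ^ n)⁻¹ ≠ 0 := by
    exact mul_ne_zero hc0 (inv_ne_zero hβn)
  have key := hc (β ^ n) (c * (β ^ n)⁻¹) hβn hy0
    ⟨1, by field_simp; simp⟩
  -- injectivity: r ≠ 0 when image ≠ 0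
  have hinj : ∀ r : R, (algebraMap R K r : K) ≠ 0 → r ≠ 0 := by
    intro r h hr0
    exact h (by simp [hr0])
  rcases key with ⟨r, hr⟩ | ⟨r, hr⟩
  · have hr0 : r ≠ 0 := hinj r (hr ▸ hβn)
    have hge := (hvR r hr0).1
    rw [← hr] at hge
    rw [hpow v hv n] at hge
    nlinarith [hβ.1]
  · have hr0 : r ≠ 0 := hinj r (hr ▸ hy0)
    have hge := (hvR r hr0).2
    rw [← hr] at hge
    have hinvv : vstar (β ^ n)⁻¹ = - vstar (β ^ n) := by
      have := hvstar (β ^ n) (β ^ n)⁻¹ hβn (inv_ne_zero hβn)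
      rw [mul_inv_cancel₀ hβn, h1 vstar hvstar] at this
      omega
    rw [hvstar c (β ^ n)⁻¹ hc0 (inv_ne_zero hβn), hinvv, hpow vstar hvstar n] at hge
    omega
end

section
/- Let R be a Henselian local domain with maximal ideal m. Suppose g ∈ R[x] and α ∈ R satisfy g'(α) ≠ 0 and g(α) ≡ 0 (mod g'(α)²·m). Then there exists α* ∈ R with g(α*) = 0 and α* − α ∈ (g(α)/g'(α))·R. -/
open Polynomial

/-- Hensel's lemma variant. If `R` is a Henselian local domain,
`g ∈ R[x]`, `α ∈ R` with `g'(α) ≠ 0` and `g(α) ∈ g'(α)² · m`, then there is `α* ∈ R`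
with `g(α*) = 0` and `α* − α ∈ (g(α)/g'(α))·R`, i.e. `g'(α)·(α* − α) ∈ g(α)·R`. -/
theorem stmt3 (R : Type*) [CommRing R] [IsDomain R] [HenselianLocalRing R] (hR : ¬ IsField R)
    (g : R[X]) (α : R)
    (hder : (derivative g).eval α ≠ 0)
    (hmod : ∃ m ∈ IsLocalRing.maximalIdeal R, g.eval α = ((derivative g).eval α) ^ 2 * m) :
    ∃ αstar : R, g.eval αstar = 0 ∧
      ∃ r : R, (derivative g).eval α * (αstar - α) = g.eval α * r := by
  classical
  obtain ⟨m, hm, hgm⟩ := hmod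
  set c : R := (derivative g).eval α with hc
  -- Taylor expansion: g(α + x) = g(α) + c·x + G(x)·x²
  set T : R[X] := taylor α g with hT
  set G : R[X] := divX (divX T) with hG
  have hT0 : T.coeff 0 = g.eval α := taylor_coeff_zero α g
  have hT1 : T.coeff 1 = c := taylor_coeff_one α g
  have hTsplit : (G * X + C c) * X + C (g.eval α) = T := by
    have h1 : divX T * X + C (T.coeff 0) = T := divX_mul_X_add T
    have h2 : G * X + C ((divX T).coeff 0) = divX T := divX_mul_X_add (divX T)
    rw [coeff_divX, hT1] at h2
    calc (G * X + C c) * X + C (g.eval α) = divX T * X + C (T.coeff 0) := by rw [h2, hT0]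
      _ = T := h1
  have key : ∀ x : R, g.eval (α + x) = g.eval α + c * x + G.eval x * x ^ 2 := by
    intro x
    have := taylor_eval α g x
    rw [← hT, ← hTsplit] at this
    rw [add_comm α x, ← this]
    simp [eval_add, eval_mul]
    ring
  -- the auxiliary polynomial h with g(α + c·m·t) = c²·m·h(t)
  set q : R[X] := C m * G.comp (C (c * m) * X) with hq
  set h : R[X] := 1 + X + q * X ^ 2 with hh
  have hevalh : ∀ t : R, g.eval (α + c * m * t) = c ^ 2 * m * h.eval t := by
    intro t
    rw [key (c * m * t), hgm, hh, hq]
    simp [eval_add, eval_mul, eval_comp]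
    ring
  set n : ℕ := h.natDegree with hn
  set N : ℕ := n + 2 with hN
  have hndeg : h.natDegree ≤ N := by omega
  set H : R[X] := reflect N h with hH
  have hHdeg : H.natDegree ≤ N := by
    rw [natDegree_le_iff_coeff_eq_zero]
    intro k hk
    rw [hH, coeff_reflect, revAt_eq_self_of_lt hk]
    exact coeff_eq_zero_of_natDegree_lt (lt_of_le_of_lt hndeg hk)
  have hcoeff0 : h.coeff 0 = 1 := by
    rw [hh]
    simp [coeff_one, coeff_X_zero, coeff_mul_X_pow']
  have Hmonic : H.Monic := by
    apply monic_of_natDegree_le_of_coeff_eq_one N hHdeg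
    rw [hH, coeff_reflect, revAt_le (le_refl N), Nat.sub_self, hcoeff0]
  -- residue computations
  set φ := IsLocalRing.residue R with hφ
  have hmapq : q.map φ = 0 := by
    rw [hq, Polynomial.map_mul, map_C,
      (IsLocalRing.residue_eq_zero_iff m).mpr hm, map_zero, zero_mul]
  have hmaph : h.map φ = 1 + X := by
    rw [hh, Polynomial.map_add, Polynomial.map_add, Polynomial.map_mul, hmapq, zero_mul,
      add_zero, Polynomial.map_one, Polynomial.map_X]
  have hmapH : H.map φ = X ^ N + X ^ (n + 1) := by
    rw [hH, ← reflect_map, hmaph, reflect_add, reflect_one]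
    congr 1
    have : (X : (IsLocalRing.ResidueField R)[X]) = X ^ 1 := (pow_one _).symm
    rw [this, reflect_monomial, revAt_le (by omega : 1 ≤ N)]
    congr 1
  have hresid : ∀ p : R[X], ∀ x : R, φ (p.eval x) = (p.map φ).eval (φ x) := by
    intro p x
    rw [eval_map, eval₂_at_apply]
  -- Henselian hypothesis 1: H(-1) ∈ m
  have h₁ : H.eval (-1) ∈ IsLocalRing.maximalIdeal R := by
    rw [← IsLocalRing.residue_eq_zero_iff, ← hφ, hresid, hmapH]
    simp [pow_succ]
    rw [hN]; ring
  -- Henselian hypothesis 2: H'(-1) is a unit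
  have h₂ : IsUnit ((derivative H).eval (-1)) := by
    rw [← IsLocalRing.notMem_maximalIdeal, ← IsLocalRing.residue_eq_zero_iff, ← hφ, ← ne_eq,
      hresid, ← derivative_map, hmapH]
    have : φ (-1) = -1 := by simp
    rw [this]
    simp only [derivative_add, derivative_X_pow, eval_add, eval_mul, eval_pow, eval_natCast,
      eval_X, eval_C]
    have hNsub : N - 1 = n + 1 := by omega
    have hnsub : n + 1 - 1 = n := by omega
    rw [hNsub, hnsub]
    have hval : (N : IsLocalRing.ResidueField R) * (-1) ^ (n + 1)
        + ((n : IsLocalRing.ResidueField R) + 1) * (-1) ^ n = -(-1) ^ n := by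
      have : (N : IsLocalRing.ResidueField R) = (n : IsLocalRing.ResidueField R) + 2 := by
        rw [hN]; push_cast; ring
      rw [this, pow_succ]
      ring
    simp only [Nat.cast_add, Nat.cast_one] at hval ⊢
    rw [hval]
    simp [pow_ne_zero]
  obtain ⟨a, haroot, hamem⟩ := HenselianLocalRing.is_henselian H Hmonic (-1) h₁ h₂
  rw [sub_neg_eq_add] at hamem
  -- a is a unit
  have haunit : IsUnit a := by
    rw [← IsLocalRing.notMem_maximalIdeal]
    intro hmem
    have h1mem : (1 : R) ∈ IsLocalRing.maximalIdeal R := by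
      have := Ideal.sub_mem _ hamem hmem
      simpa using this
    exact (IsLocalRing.maximalIdeal.isMaximal R).ne_top
      (Ideal.eq_top_of_isUnit_mem _ h1mem isUnit_one)
  letI : Invertible a := haunit.invertible
  have e2 : ∀ (p : R[X]) (x : R), eval₂ (RingHom.id R) x p = p.eval x := fun _ _ => rfl
  have hevb : h.eval (⅟ a) = 0 := by
    have h5 := eval₂_reflect_mul_pow (RingHom.id R) (⅟ a) N h hndeg
    rw [invOf_invOf, e2, e2, ← hH] at h5
    rw [← h5, haroot, zero_mul]
  refine ⟨α + c * m * ⅟ a, ?_, ⅟ a, ?_⟩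
  · rw [hevalh (⅟ a), hevb, mul_zero]
  · rw [hgm]
    ring
end

section
/- Let ∂ : ℚ_p → ℚ_p be a ℚ-linear derivation with ∂t = 1 for some fixed t ∈ ℚ_p transcendental over ℚ. Then the graph {(a, ∂a) : a ∈ ℚ_p} is dense in ℚ_p² for the p-adic topology. -/
/-- If `∂ : ℚ_p → ℚ_p` is a ℚ-linear derivation with `∂ t = 1` for some
`t` transcendental over `ℚ`, then the graph of `∂` is dense in `ℚ_p²`. -/
theorem stmt9 (p : ℕ) [Fact p.Prime] (D : ℚ_[p] → ℚ_[p])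
    (hadd : ∀ a b : ℚ_[p], D (a + b) = D a + D b)
    (hmul : ∀ a b : ℚ_[p], D (a * b) = a * D b + b * D a)
    (hQ : ∀ q : ℚ, D (q : ℚ_[p]) = 0)
    (t : ℚ_[p]) (ht : Transcendental ℚ t) (hDt : D t = 1) :
    Dense {x : ℚ_[p] × ℚ_[p] | ∃ a : ℚ_[p], x = (a, D a)} := by
  rw [Metric.dense_iff]
  rintro ⟨x, y⟩ ε hε
  obtain ⟨q2, hq2⟩ := Padic.rat_dense (p := p) y hε
  obtain ⟨q1, hq1⟩ := Padic.rat_dense (p := p) (x - q2 * t) hε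
  refine ⟨((q1 : ℚ_[p]) + q2 * t, (q2 : ℚ_[p])), ?_, ⟨(q1 : ℚ_[p]) + q2 * t, ?_⟩⟩
  · rw [Metric.mem_ball, Prod.dist_eq]
    have h1 : dist x ((q1 : ℚ_[p]) + q2 * t) < ε := by
      rw [dist_eq_norm]
      simpa [sub_sub, add_comm] using hq1
    have h2 : dist y (q2 : ℚ_[p]) < ε := by rw [dist_eq_norm]; exact hq2
    rw [dist_comm x, dist_comm y] at *
    exact max_lt h1 h2
  · have : D ((q1 : ℚ_[p]) + q2 * t) = q2 := by
      rw [hadd, hmul, hQ, hDt, hQ]; ring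
    simp [this]
end

section
/- Let ∂ : ℚ_p → ℚ_p be a nonzero ℚ-linear derivation and E = {a ∈ ℤ_p : ∂a ∈ ℤ_p}. Then E is a subring of ℤ_p and the fraction field of E is ℚ_p. -/
set_option maxHeartbeats 1000000 in


/-- For a nonzero ℚ-linear derivation `∂` on `ℚ_p`, the set
`E = {a ∈ ℤ_p : ∂a ∈ ℤ_p}` is a subring of `ℤ_p` and its fraction field is `ℚ_p`. -/
theorem stmt10 (p : ℕ) [Fact p.Prime] (D : ℚ_[p] → ℚ_[p])
    (hadd : ∀ a b : ℚ_[p], D (a + b) = D a + D b)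
    (hmul : ∀ a b : ℚ_[p], D (a * b) = a * D b + b * D a)
    (hQ : ∀ q : ℚ, D (q : ℚ_[p]) = 0)
    (hne : D ≠ 0) :
    (∃ S : Subring ℚ_[p], (S : Set ℚ_[p]) = {a : ℚ_[p] | ‖a‖ ≤ 1 ∧ ‖D a‖ ≤ 1}) ∧
    ∀ x : ℚ_[p], ∃ a b : ℚ_[p],
      (‖a‖ ≤ 1 ∧ ‖D a‖ ≤ 1) ∧ (‖b‖ ≤ 1 ∧ ‖D b‖ ≤ 1) ∧ b ≠ 0 ∧ x = a / b := by
  have hD0 : D 0 = 0 := by simpa using hQ 0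
  have hD1 : D 1 = 0 := by simpa using hQ 1
  have hDneg : ∀ a : ℚ_[p], D (-a) = -D a := by
    intro a
    have h := hadd a (-a)
    rw [add_neg_cancel, hD0] at h
    linear_combination -h
  constructor
  · refine ⟨{ carrier := {a : ℚ_[p] | ‖a‖ ≤ 1 ∧ ‖D a‖ ≤ 1}
              zero_mem' := by simp [hD0]
              one_mem' := by simp [hD1]
              add_mem' := ?_
              mul_mem' := ?_
              neg_mem' := ?_ }, rfl⟩
    · rintro a b ⟨ha1, ha2⟩ ⟨hb1, hb2⟩
      constructor
      · rw [norm_mul]; exact mul_le_one₀ ha1 (norm_nonneg _) hb1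
      · rw [hmul]
        refine le_trans (Padic.nonarchimedean _ _) (max_le ?_ ?_)
        · rw [norm_mul]; exact mul_le_one₀ ha1 (norm_nonneg _) hb2
        · rw [norm_mul]; exact mul_le_one₀ hb1 (norm_nonneg _) ha2
    · rintro a b ⟨ha1, ha2⟩ ⟨hb1, hb2⟩
      constructor
      · exact le_trans (Padic.nonarchimedean _ _) (max_le ha1 hb1)
      · rw [hadd]
        exact le_trans (Padic.nonarchimedean _ _) (max_le ha2 hb2)
    · rintro a ⟨ha1, ha2⟩
      exact ⟨by simpa using ha1, by rw [hDneg]; simpa using ha2⟩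
  · intro x
    have hp1 : (1 : ℝ) < p := by exact_mod_cast (Fact.out : p.Prime).one_lt
    obtain ⟨n, hn⟩ := pow_unbounded_of_one_lt (max ‖x‖ ‖D x‖) hp1
    have hx1 : ‖x‖ ≤ (p : ℝ) ^ n := le_trans (le_max_left _ _) hn.le
    have hx2 : ‖D x‖ ≤ (p : ℝ) ^ n := le_trans (le_max_right _ _) hn.le
    have hppos : (0 : ℝ) < (p : ℝ) ^ n := by positivity
    set b : ℚ_[p] := (p : ℚ_[p]) ^ n with hb
    have hbrat : b = ((p ^ n : ℚ) : ℚ_[p]) := by push_cast; rfl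
    have hDb : D b = 0 := by rw [hbrat]; exact hQ _
    have hbnorm : ‖b‖ = ((p : ℝ) ^ n)⁻¹ := by
      rw [hb, norm_pow, Padic.norm_p, inv_pow]
    have hbne : b ≠ 0 := by
      apply pow_ne_zero
      exact_mod_cast (Fact.out : p.Prime).ne_zero
    refine ⟨x * b, b, ⟨?_, ?_⟩, ⟨?_, ?_⟩, hbne, ?_⟩
    · rw [norm_mul, hbnorm]
      calc ‖x‖ * ((p:ℝ)^n)⁻¹ ≤ (p:ℝ)^n * ((p:ℝ)^n)⁻¹ :=
            mul_le_mul_of_nonneg_right hx1 (by positivity)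
        _ = 1 := mul_inv_cancel₀ hppos.ne'
    · rw [hmul, hDb, mul_zero, zero_add, norm_mul, hbnorm]
      calc ((p:ℝ)^n)⁻¹ * ‖D x‖ ≤ ((p:ℝ)^n)⁻¹ * ((p:ℝ)^n) :=
            mul_le_mul_of_nonneg_left hx2 (by positivity)
        _ = 1 := inv_mul_cancel₀ hppos.ne'
    · rw [hbnorm]
      exact inv_le_one_of_one_le₀ (one_le_pow₀ hp1.le)
    · rw [hDb]; simp
    · rw [mul_div_assoc, div_self hbne, mul_one]
end

section
/- Let ∂ : ℚ_p → ℚ_p be a nonzero ℚ-linear derivation and E = {a ∈ ℤ_p : ∂a ∈ ℤ_p}. Then E is a Henselian local ring: for any g ∈ E[x] and a ∈ E with g(a) ∈ E ∩ pℤ_p and g'(a) ∉ E ∩ pℤ_p, there exists a* ∈ E with g(a*) = 0 and a* − a ∈ E ∩ pℤ_p. -/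
open Polynomial

lemma mySumNorm {p : ℕ} [Fact p.Prime] {ι : Type*} (s : Finset ι) (f : ι → ℚ_[p])
    (h : ∀ i ∈ s, ‖f i‖ ≤ 1) : ‖∑ i ∈ s, f i‖ ≤ 1 := by
  induction s using Finset.cons_induction with
  | empty => simp
  | cons i s hi ih =>
    rw [Finset.sum_cons]
    exact le_trans (Padic.nonarchimedean _ _)
      (max_le (h i (Finset.mem_cons_self i s)) (ih fun j hj => h j (Finset.mem_cons_of_mem hj)))

/-- `E = {a ∈ ℤ_p : ∂a ∈ ℤ_p}` is Henselian: for a polynomial `g` with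
coefficients in `E` and `a ∈ E` with `g(a) ∈ E ∩ pℤ_p` and `g'(a) ∉ E ∩ pℤ_p`, there is
`a* ∈ E` with `g(a*) = 0` and `a* − a ∈ E ∩ pℤ_p`. -/
theorem stmt12 (p : ℕ) [Fact p.Prime] (D : ℚ_[p] → ℚ_[p])
    (hadd : ∀ a b : ℚ_[p], D (a + b) = D a + D b)
    (hmul : ∀ a b : ℚ_[p], D (a * b) = a * D b + b * D a)
    (hQ : ∀ q : ℚ, D (q : ℚ_[p]) = 0)
    (hne : D ≠ 0)
    (g : ℚ_[p][X]) (hg : ∀ i : ℕ, ‖g.coeff i‖ ≤ 1 ∧ ‖D (g.coeff i)‖ ≤ 1)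
    (a : ℚ_[p]) (ha : ‖a‖ ≤ 1 ∧ ‖D a‖ ≤ 1)
    (hga : ‖g.eval a‖ < 1)
    (hg'a : ¬ ‖(derivative g).eval a‖ < 1) :
    ∃ astar : ℚ_[p], (‖astar‖ ≤ 1 ∧ ‖D astar‖ ≤ 1) ∧ g.eval astar = 0 ∧
      (‖astar - a‖ ≤ 1 ∧ ‖D (astar - a)‖ ≤ 1) ∧ ‖astar - a‖ < 1 := by
  have hD0 : D 0 = 0 := by simpa using hQ 0
  have hD1 : D 1 = 0 := by simpa using hQ 1
  have hDneg : ∀ x : ℚ_[p], D (-x) = -D x := by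
    intro x
    have h := hadd x (-x)
    simp only [add_neg_cancel, hD0] at h
    linear_combination -h
  have hpow : ∀ (x : ℚ_[p]) (k : ℕ), D (x ^ (k + 1)) = (k + 1 : ℚ_[p]) * x ^ k * D x := by
    intro x k
    induction k with
    | zero => simp
    | succ k ih =>
      rw [pow_succ, hmul, ih]
      push_cast
      ring
  -- derivation applied to polynomial evaluation
  have key : ∀ (x : ℚ_[p]) (q : ℚ_[p][X]),
      D (q.eval x) = (q.sum fun i c => D c * x ^ i) + (derivative q).eval x * D x := by
    intro x q
    induction q using Polynomial.induction_on' with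
    | add f g hf hg =>
      rw [eval_add, hadd, hf, hg, derivative_add, eval_add,
        Polynomial.sum_add_index _ _ _ (fun i => by simp [hD0]) (fun i b c => by simp [hadd, add_mul])]
      ring
    | monomial n c =>
      rw [eval_monomial, hmul,
        Polynomial.sum_monomial_index c _ (by simp [hD0]), derivative_monomial]
      cases n with
      | zero => simp [hD1]
      | succ k =>
        rw [hpow, eval_monomial]
        push_cast
        ring
  -- lift g to ℤ_[p][X]
  set F : ℤ_[p][X] := ∑ i ∈ g.support, Polynomial.C (R := ℤ_[p]) ⟨g.coeff i, (hg i).1⟩ * X ^ i with hF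
  have hmap : F.map (PadicInt.Coe.ringHom (p := p)) = g := by
    rw [hF, Polynomial.map_sum]
    simp only [Polynomial.map_mul, Polynomial.map_C, Polynomial.map_pow, Polynomial.map_X]
    conv_rhs => rw [g.as_sum_support]
    refine Finset.sum_congr rfl fun i _ => ?_
    rw [← Polynomial.C_mul_X_pow_eq_monomial]
    exact congrArg (· * X ^ i) (Polynomial.map_C _)
  have heval : ∀ z : ℤ_[p], ((F.eval z : ℤ_[p]) : ℚ_[p]) = g.eval (z : ℚ_[p]) := by
    intro z
    rw [← hmap, Polynomial.eval_map]
    exact (Polynomial.eval₂_at_apply (PadicInt.Coe.ringHom (p := p)) z).symm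
  have hderiv : ∀ z : ℤ_[p], (((derivative F).eval z : ℤ_[p]) : ℚ_[p]) = (derivative g).eval (z : ℚ_[p]) := by
    intro z
    rw [← hmap, Polynomial.derivative_map, Polynomial.eval_map]
    exact (Polynomial.eval₂_at_apply (PadicInt.Coe.ringHom (p := p)) z).symm
  set a₀ : ℤ_[p] := ⟨a, ha.1⟩ with ha₀
  have ha₀c : (a₀ : ℚ_[p]) = a := rfl
  have hda : ‖(derivative F).eval a₀‖ = 1 := by
    refine le_antisymm (PadicInt.norm_le_one _) ?_
    rw [PadicInt.norm_def, hderiv, ha₀c]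
    exact not_lt.mp hg'a
  have hnorm : ‖F.eval a₀‖ < ‖(derivative F).eval a₀‖ ^ 2 := by
    rw [hda, one_pow, PadicInt.norm_def, heval, ha₀c]
    exact hga
  obtain ⟨z, hz0, hzdist, hzderiv, -⟩ := hensels_lemma hnorm
  simp only [Polynomial.coe_aeval_eq_eval] at hz0 hzdist hzderiv
  have hgz : g.eval (z : ℚ_[p]) = 0 := by
    rw [← heval, hz0]; rfl
  have hg'z : ‖(derivative g).eval (z : ℚ_[p])‖ = 1 := by
    rw [← hderiv, ← PadicInt.norm_def, hzderiv, hda]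
  have hzsub : ((z - a₀ : ℤ_[p]) : ℚ_[p]) = (z : ℚ_[p]) - a := by
    push_cast [ha₀c]; ring
  have hdist : ‖(z : ℚ_[p]) - a‖ < 1 := by
    rw [← hzsub, ← PadicInt.norm_def]
    calc ‖z - a₀‖ < ‖(derivative F).eval a₀‖ := hzdist
    _ = 1 := hda
  have hznorm : ‖(z : ℚ_[p])‖ ≤ 1 := z.2
  -- bound on D z
  have hS : ‖g.sum fun i c => D c * (z : ℚ_[p]) ^ i‖ ≤ 1 := by
    apply mySumNorm
    intro i _
    rw [norm_mul, norm_pow]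
    exact mul_le_one₀ (hg i).2 (by positivity) (pow_le_one₀ (norm_nonneg _) hznorm)
  have hkey := key (z : ℚ_[p]) g
  rw [hgz, hD0] at hkey
  have hg'ne : (derivative g).eval (z : ℚ_[p]) ≠ 0 := by
    intro h; rw [h, norm_zero] at hg'z; norm_num at hg'z
  have hDz : D (z : ℚ_[p]) = -(g.sum fun i c => D c * (z : ℚ_[p]) ^ i) / (derivative g).eval (z : ℚ_[p]) := by
    field_simp
    linear_combination -hkey
  have hDznorm : ‖D (z : ℚ_[p])‖ ≤ 1 := by
    rw [hDz, norm_div, norm_neg, hg'z, div_one]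
    exact hS
  have hDsub : D ((z : ℚ_[p]) - a) = D (z : ℚ_[p]) - D a := by
    rw [sub_eq_add_neg, hadd, hDneg, ← sub_eq_add_neg]
  refine ⟨(z : ℚ_[p]), ⟨hznorm, hDznorm⟩, hgz, ⟨hdist.le, ?_⟩, hdist⟩
  rw [hDsub, sub_eq_add_neg]
  exact le_trans (Padic.nonarchimedean _ _)
    (max_le hDznorm (by rw [norm_neg]; exact ha.2))
end

section
/- Let ∂ be a nonzero ℚ-linear derivation on ℚ_p and E = {a ∈ ℤ_p : ∂a ∈ ℤ_p}. Suppose a, a', a'' ∈ ℚ_p with v(a) ≤ min{v(a'), v(a'')} and v(∂(a'/a)) ≤ v(∂(a''/a)). Then a'' ∈ aE + a'E. -/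
/-- Let `∂` be a nonzero ℚ-linear derivation on `ℚ_p` and
`E = {x ∈ ℤ_p : ∂x ∈ ℤ_p}`. If `v(a) ≤ min{v(a'), v(a'')}` and
`v(∂(a'/a)) ≤ v(∂(a''/a))` (stated via norms), then `a'' ∈ aE + a'E`. -/
theorem stmt13 (p : ℕ) [Fact p.Prime] (D : ℚ_[p] → ℚ_[p])
    (hadd : ∀ x y : ℚ_[p], D (x + y) = D x + D y)
    (hmul : ∀ x y : ℚ_[p], D (x * y) = x * D y + y * D x)
    (hQ : ∀ q : ℚ, D (q : ℚ_[p]) = 0)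
    (hne : D ≠ 0)
    (a a' a'' : ℚ_[p])
    (h1 : ‖a'‖ ≤ ‖a‖) (h2 : ‖a''‖ ≤ ‖a‖)
    (h3 : ‖D (a'' / a)‖ ≤ ‖D (a' / a)‖) :
    ∃ e e' : ℚ_[p], (‖e‖ ≤ 1 ∧ ‖D e‖ ≤ 1) ∧ (‖e'‖ ≤ 1 ∧ ‖D e'‖ ≤ 1) ∧
      a'' = a * e + a' * e' := by
  have hD0 : D 0 = 0 := by simpa using hQ 0
  have hnsub : ∀ u v : ℚ_[p], ‖u - v‖ ≤ max ‖u‖ ‖v‖ := fun u v => by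
    simpa [sub_eq_add_neg] using Padic.nonarchimedean u (-v)
  have hsub : ∀ x y : ℚ_[p], D (x - y) = D x - D y := by
    intro x y
    have h := hadd (x - y) y
    simp only [sub_add_cancel] at h
    linear_combination -h
  by_cases ha : a = 0
  · have ha' : a' = 0 := by
      have : ‖a'‖ ≤ 0 := by simpa [ha] using h1
      simpa using le_antisymm this (norm_nonneg _)
    have ha'' : a'' = 0 := by
      have : ‖a''‖ ≤ 0 := by simpa [ha] using h2
      simpa using le_antisymm this (norm_nonneg _)
    exact ⟨0, 0, ⟨by simp, by simp [hD0]⟩, ⟨by simp, by simp [hD0]⟩,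
      by simp [ha, ha', ha'']⟩
  · set x := a' / a with hx
    set y := a'' / a with hy
    have hax : a * x = a' := by rw [hx]; field_simp
    have hay : a * y = a'' := by rw [hy]; field_simp
    have hxn : ‖x‖ ≤ 1 := by
      rw [hx, norm_div, div_le_one (norm_pos_iff.mpr ha)]; exact h1
    have hyn : ‖y‖ ≤ 1 := by
      rw [hy, norm_div, div_le_one (norm_pos_iff.mpr ha)]; exact h2
    by_cases hdx : D x = 0
    · have hdy : D y = 0 := by
        have : ‖D y‖ ≤ 0 := by simpa [hdx] using h3
        simpa using le_antisymm this (norm_nonneg _)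
      exact ⟨y, 0, ⟨hyn, by simp [hdy]⟩, ⟨by simp, by simp [hD0]⟩,
        by rw [hay]; ring⟩
    · have hDxpos : (0 : ℝ) < ‖D x‖ := norm_pos_iff.mpr hdx
      have hratio : ‖D y / D x‖ ≤ 1 := by
        rw [norm_div, div_le_one hDxpos]; exact h3
      have hεpos : (0 : ℝ) < min 1 ‖D x‖⁻¹ := by positivity
      obtain ⟨q, hq⟩ := Padic.rat_dense p (D y / D x) hεpos
      refine ⟨y - (q : ℚ_[p]) * x, (q : ℚ_[p]), ⟨?_, ?_⟩, ⟨?_, ?_⟩, ?_⟩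
      · calc ‖y - (q : ℚ_[p]) * x‖ ≤ max ‖y‖ ‖(q : ℚ_[p]) * x‖ := hnsub _ _
            _ ≤ 1 := by
              apply max_le hyn
              rw [norm_mul]
              calc ‖(q : ℚ_[p])‖ * ‖x‖ ≤ ‖(q : ℚ_[p])‖ * 1 :=
                    mul_le_mul_of_nonneg_left hxn (norm_nonneg _)
                _ = ‖(q : ℚ_[p])‖ := mul_one _
                _ ≤ 1 := by
                    have : ‖(q : ℚ_[p])‖ = ‖D y / D x - (D y / D x - q)‖ := by ring_nf
                    rw [this]
                    exact (hnsub _ _).trans (max_le hratio (hq.le.trans (min_le_left _ _)))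
      · have hDe : D (y - (q : ℚ_[p]) * x) = D y - (q : ℚ_[p]) * D x := by
          rw [hsub, hmul, hQ]; ring
        rw [hDe]
        have : D y - (q : ℚ_[p]) * D x = D x * (D y / D x - q) := by
          field_simp
        rw [this, norm_mul]
        calc ‖D x‖ * ‖D y / D x - (q : ℚ_[p])‖ ≤ ‖D x‖ * ‖D x‖⁻¹ := by
              apply mul_le_mul_of_nonneg_left _ (norm_nonneg _)
              exact hq.le.trans (min_le_right _ _)
          _ = 1 := mul_inv_cancel₀ (ne_of_gt hDxpos)
      · have : ‖(q : ℚ_[p])‖ = ‖D y / D x - (D y / D x - q)‖ := by ring_nf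
        rw [this]
        exact (hnsub _ _).trans (max_le hratio (hq.le.trans (min_le_left _ _)))
      · simp [hQ]
      · have : a * (y - (q : ℚ_[p]) * x) + a' * q = a * y + q * (a' - a * x) := by ring
        rw [this, hax, hay]; ring
end

section
/- Let ∂ be a nonzero ℚ-linear derivation on ℚ_p and E = {a ∈ ℤ_p : ∂a ∈ ℤ_p}. Then every nonzero ideal I of E is generated by two elements: choosing a ∈ I minimizing v(a) and a' ∈ I minimizing v(∂(a'/a)), one has I = aE + a'E. -/
theorem stmt14_key (p : ℕ) [Fact p.Prime] (D : ℚ_[p] → ℚ_[p])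
    (hadd : ∀ x y : ℚ_[p], D (x + y) = D x + D y)
    (hmul : ∀ x y : ℚ_[p], D (x * y) = x * D y + y * D x)
    (hQ : ∀ q : ℚ, D (q : ℚ_[p]) = 0)
    (S : Subring ℚ_[p]) (hS : (S : Set ℚ_[p]) = {x : ℚ_[p] | ‖x‖ ≤ 1 ∧ ‖D x‖ ≤ 1})
    (I : Ideal S) (hI : I ≠ ⊥)
    (a : S) (ha : a ∈ I) (hamax : ∀ b : S, b ∈ I → ‖(b : ℚ_[p])‖ ≤ ‖(a : ℚ_[p])‖)
    (a' : S) (ha' : a' ∈ I)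
    (ha'max : ∀ b : S, b ∈ I →
      ‖D ((b : ℚ_[p]) / (a : ℚ_[p]))‖ ≤ ‖D ((a' : ℚ_[p]) / (a : ℚ_[p]))‖) :
    I = Ideal.span {a, a'} := by
  have memS : ∀ x : ℚ_[p], x ∈ S ↔ ‖x‖ ≤ 1 ∧ ‖D x‖ ≤ 1 := by
    intro x; rw [← SetLike.mem_coe, hS]; rfl
  have hD0 : D 0 = 0 := by simpa using hQ 0
  have hDneg : ∀ x : ℚ_[p], D (-x) = -D x := fun x => by
    have h := hadd x (-x)
    rw [add_neg_cancel, hD0] at h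
    exact eq_neg_of_add_eq_zero_right h.symm
  have hDsub : ∀ x y : ℚ_[p], D (x - y) = D x - D y := fun x y => by
    rw [sub_eq_add_neg, hadd, hDneg, sub_eq_add_neg]
  -- a ≠ 0
  obtain ⟨b0, hb0I, hb0⟩ := Submodule.exists_mem_ne_zero_of_ne_bot hI
  have ha0 : (a : ℚ_[p]) ≠ 0 := by
    intro h
    have h1 : ‖(b0 : ℚ_[p])‖ ≤ 0 := by simpa [h] using hamax b0 hb0I
    have h2 : (b0 : ℚ_[p]) = 0 := by
      have := norm_nonneg (b0 : ℚ_[p])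
      have : ‖(b0 : ℚ_[p])‖ = 0 := le_antisymm h1 this
      exact norm_eq_zero.mp this
    exact hb0 (Subtype.ext h2)
  have hapos : 0 < ‖(a : ℚ_[p])‖ := norm_pos_iff.mpr ha0
  -- derivation quotient formula
  apply le_antisymm
  · intro b hb
    set u : ℚ_[p] := (b : ℚ_[p]) / (a : ℚ_[p]) with hu
    have hu1 : ‖u‖ ≤ 1 := by
      rw [hu, norm_div, div_le_one hapos]
      exact hamax b hb
    set c : ℚ_[p] := D u with hc
    set c' : ℚ_[p] := D ((a' : ℚ_[p]) / (a : ℚ_[p])) with hc'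
    have hcc' : ‖c‖ ≤ ‖c'‖ := ha'max b hb
    by_cases hone : ‖c'‖ ≤ 1
    · -- b = a * u with u ∈ S
      have huS : u ∈ S := (memS u).mpr ⟨hu1, le_trans hcc' hone⟩
      refine Ideal.mem_span_pair.mpr ⟨⟨u, huS⟩, 0, ?_⟩
      apply Subtype.ext
      push_cast
      rw [hu]
      field_simp
      ring
    · push_neg at hone
      have hc'0 : c' ≠ 0 := by
        intro h; rw [h, norm_zero] at hone; linarith
      obtain ⟨q, hq⟩ := Padic.rat_dense p (c / c') (ε := ‖c'‖⁻¹) (by positivity)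
      have hsub : ∀ x y : ℚ_[p], ‖x - y‖ ≤ max ‖x‖ ‖y‖ := fun x y => by
        have := Padic.nonarchimedean x (-y)
        simpa [sub_eq_add_neg] using this
      have hcd : ‖c / c'‖ ≤ 1 := by
        rw [norm_div, div_le_one (norm_pos_iff.mpr hc'0)]; exact hcc'
      have hinv1 : ‖c'‖⁻¹ < 1 := by
        rw [inv_lt_one_iff₀]; right; exact hone
      have hq1 : ‖(q : ℚ_[p])‖ ≤ 1 := by
        have h1 : (q : ℚ_[p]) = c / c' - (c / c' - q) := by ring
        rw [h1]
        exact le_trans (hsub _ _) (max_le hcd (le_trans hq.le hinv1.le))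
      have hqS : ((q : ℚ) : ℚ_[p]) ∈ S := (memS _).mpr ⟨hq1, by rw [hQ]; simp⟩
      have hkey : ‖c - q * c'‖ ≤ 1 := by
        have h1 : c - (q : ℚ_[p]) * c' = c' * (c / c' - q) := by
          field_simp
        rw [h1, norm_mul]
        calc ‖c'‖ * ‖c / c' - (q : ℚ_[p])‖ ≤ ‖c'‖ * ‖c'‖⁻¹ :=
              mul_le_mul_of_nonneg_left hq.le (norm_nonneg _)
          _ = 1 := mul_inv_cancel₀ (norm_ne_zero_iff.mpr hc'0)
      set w : ℚ_[p] := (a' : ℚ_[p]) / (a : ℚ_[p]) with hw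
      have hw1 : ‖w‖ ≤ 1 := by
        rw [hw, norm_div, div_le_one hapos]; exact hamax a' ha'
      set e : ℚ_[p] := u - q * w with he
      have heN : ‖e‖ ≤ 1 := by
        refine le_trans (hsub u ((q : ℚ_[p]) * w)) (max_le hu1 ?_)
        rw [norm_mul]
        exact mul_le_one₀ hq1 (norm_nonneg _) hw1
      have hDqw : D ((q : ℚ_[p]) * w) = (q : ℚ_[p]) * D w := by
        rw [hmul, hQ]; ring
      have heD : D e = c - q * c' := by
        rw [he, hDsub, hDqw, hc, hc', hw]
      have heS : e ∈ S := (memS e).mpr ⟨heN, by rw [heD]; exact hkey⟩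
      refine Ideal.mem_span_pair.mpr ⟨⟨e, heS⟩, ⟨(q : ℚ_[p]), hqS⟩, ?_⟩
      apply Subtype.ext
      push_cast
      rw [he, hu, hw]
      field_simp
      ring
  · rw [Ideal.span_le]
    rintro x hx
    simp only [Set.mem_insert_iff, Set.mem_singleton_iff] at hx
    rcases hx with rfl | rfl
    · exact ha
    · exact ha'



/-- Let `E = {x ∈ ℤ_p : ∂x ∈ ℤ_p}` (realized as a subring `S` of `ℚ_p`).
Every nonzero ideal `I` of `E` is generated by two elements; indeed, if `a ∈ I` minimizes
`v` (equivalently, maximizes the norm) on `I` and `a' ∈ I` minimizes `v(∂(·/a))`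
(maximizes `‖∂(·/a)‖`) on `I`, then `I = aE + a'E`. -/
theorem stmt14 (p : ℕ) [Fact p.Prime] (D : ℚ_[p] → ℚ_[p])
    (hadd : ∀ x y : ℚ_[p], D (x + y) = D x + D y)
    (hmul : ∀ x y : ℚ_[p], D (x * y) = x * D y + y * D x)
    (hQ : ∀ q : ℚ, D (q : ℚ_[p]) = 0)
    (hne : D ≠ 0)
    (S : Subring ℚ_[p]) (hS : (S : Set ℚ_[p]) = {x : ℚ_[p] | ‖x‖ ≤ 1 ∧ ‖D x‖ ≤ 1})
    (I : Ideal S) (hI : I ≠ ⊥) :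
    (∃ x y : S, I = Ideal.span {x, y}) ∧
    ∀ a : S, a ∈ I → (∀ b : S, b ∈ I → ‖(b : ℚ_[p])‖ ≤ ‖(a : ℚ_[p])‖) →
    ∀ a' : S, a' ∈ I →
      (∀ b : S, b ∈ I → ‖D ((b : ℚ_[p]) / (a : ℚ_[p]))‖ ≤ ‖D ((a' : ℚ_[p]) / (a : ℚ_[p]))‖) →
      I = Ideal.span {a, a'} := by
  have memS : ∀ x : ℚ_[p], x ∈ S ↔ ‖x‖ ≤ 1 ∧ ‖D x‖ ≤ 1 := by
    intro x; rw [← SetLike.mem_coe, hS]; rfl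
  have hp1 : (1 : ℝ) < p := by exact_mod_cast (Fact.out : p.Prime).one_lt
  constructor
  swap
  · intro a ha hamax a' ha' ha'max
    exact stmt14_key p D hadd hmul hQ S hS I hI a ha hamax a' ha' ha'max
  classical
  obtain ⟨b0, hb0I, hb0⟩ := Submodule.exists_mem_ne_zero_of_ne_bot hI
  have hb0' : (b0 : ℚ_[p]) ≠ 0 := fun h => hb0 (Subtype.ext h)
  set P : ℕ → Prop :=
    fun n => ∃ b : S, b ∈ I ∧ (b : ℚ_[p]) ≠ 0 ∧ (b : ℚ_[p]).valuation = n with hP_def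
  have hP : ∃ n, P n := by
    refine ⟨(b0 : ℚ_[p]).valuation.toNat, b0, hb0I, hb0', ?_⟩
    rw [Int.toNat_of_nonneg ((Padic.norm_le_one_iff_val_nonneg _).mp ((memS _).mp b0.2).1)]
  obtain ⟨a, haI, ha0, haval⟩ := Nat.find_spec hP
  have hapos : 0 < ‖(a : ℚ_[p])‖ := norm_pos_iff.mpr ha0
  have hamax : ∀ b : S, b ∈ I → ‖(b : ℚ_[p])‖ ≤ ‖(a : ℚ_[p])‖ := by
    intro b hb
    by_cases hbz : (b : ℚ_[p]) = 0
    · rw [hbz, norm_zero]; exact hapos.le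
    · have hvb : 0 ≤ (b : ℚ_[p]).valuation :=
        (Padic.norm_le_one_iff_val_nonneg _).mp ((memS _).mp b.2).1
      have hle : Nat.find hP ≤ (b : ℚ_[p]).valuation.toNat :=
        Nat.find_min' hP ⟨b, hb, hbz, (Int.toNat_of_nonneg hvb).symm⟩
      have hval : (a : ℚ_[p]).valuation ≤ (b : ℚ_[p]).valuation := by
        rw [haval, ← Int.toNat_of_nonneg hvb]
        exact_mod_cast hle
      rw [Padic.norm_eq_zpow_neg_valuation hbz, Padic.norm_eq_zpow_neg_valuation ha0]
      exact zpow_le_zpow_right₀ hp1.le (neg_le_neg hval)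
  have hsub : ∀ x y : ℚ_[p], ‖x - y‖ ≤ max ‖x‖ ‖y‖ := fun x y => by
    have := Padic.nonarchimedean x (-y)
    simpa [sub_eq_add_neg] using this
  have hbound : ∀ b : S, b ∈ I →
      ‖D ((b : ℚ_[p]) / (a : ℚ_[p]))‖ ≤ ‖(a : ℚ_[p])‖⁻¹ := by
    intro b hb
    set u : ℚ_[p] := (b : ℚ_[p]) / (a : ℚ_[p]) with hu
    have hu1 : ‖u‖ ≤ 1 := by
      rw [hu, norm_div, div_le_one hapos]; exact hamax b hb
    have hbe : (b : ℚ_[p]) = (a : ℚ_[p]) * u := by rw [hu]; field_simp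
    have h1 : D (b : ℚ_[p]) = (a : ℚ_[p]) * D u + u * D (a : ℚ_[p]) := by
      conv_lhs => rw [hbe]
      exact hmul _ _
    have h2 : D u = (D (b : ℚ_[p]) - u * D (a : ℚ_[p])) / (a : ℚ_[p]) := by
      rw [eq_div_iff ha0, h1]; ring
    rw [h2, norm_div]
    have hX : ‖D (b : ℚ_[p]) - u * D (a : ℚ_[p])‖ ≤ 1 := by
      refine le_trans (hsub _ _) (max_le ((memS _).mp b.2).2 ?_)
      rw [norm_mul]
      exact mul_le_one₀ hu1 (norm_nonneg _) ((memS _).mp a.2).2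
    calc ‖D (b : ℚ_[p]) - u * D (a : ℚ_[p])‖ / ‖(a : ℚ_[p])‖
        ≤ 1 / ‖(a : ℚ_[p])‖ := by gcongr
      _ = ‖(a : ℚ_[p])‖⁻¹ := one_div _
  by_cases hex : ∃ v : ℤ, ∃ b : S, b ∈ I ∧ D ((b : ℚ_[p]) / (a : ℚ_[p])) ≠ 0 ∧
      (D ((b : ℚ_[p]) / (a : ℚ_[p]))).valuation = v
  · have hbdd : ∃ lb : ℤ, ∀ v : ℤ, (∃ b : S, b ∈ I ∧ D ((b : ℚ_[p]) / (a : ℚ_[p])) ≠ 0 ∧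
        (D ((b : ℚ_[p]) / (a : ℚ_[p]))).valuation = v) → lb ≤ v := by
      refine ⟨-(a : ℚ_[p]).valuation, ?_⟩
      rintro v ⟨b, hb, hdb, rfl⟩
      have h1 : ‖D ((b : ℚ_[p]) / (a : ℚ_[p]))‖ ≤ (p : ℝ) ^ ((a : ℚ_[p]).valuation) := by
        have h := hbound b hb
        rwa [Padic.norm_eq_zpow_neg_valuation ha0, ← zpow_neg, neg_neg] at h
      rw [Padic.norm_eq_zpow_neg_valuation hdb] at h1
      have := (zpow_le_zpow_iff_right₀ hp1).mp h1
      linarith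
    obtain ⟨v0, ⟨a', ha'I, ha'0, ha'val⟩, hmin⟩ := Int.exists_least_of_bdd hbdd hex
    refine ⟨a, a', stmt14_key p D hadd hmul hQ S hS I hI a haI hamax a' ha'I ?_⟩
    intro b hb
    by_cases h : D ((b : ℚ_[p]) / (a : ℚ_[p])) = 0
    · rw [h, norm_zero]; exact norm_nonneg _
    · rw [Padic.norm_eq_zpow_neg_valuation h, Padic.norm_eq_zpow_neg_valuation ha'0, ha'val]
      exact zpow_le_zpow_right₀ hp1.le (neg_le_neg (hmin _ ⟨b, hb, h, rfl⟩))
  · have hzero : ∀ b : S, b ∈ I → D ((b : ℚ_[p]) / (a : ℚ_[p])) = 0 := by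
      intro b hb
      by_contra h
      exact hex ⟨_, b, hb, h, rfl⟩
    refine ⟨a, a, stmt14_key p D hadd hmul hQ S hS I hI a haI hamax a haI ?_⟩
    intro b hb
    rw [hzero b hb, norm_zero]
    exact norm_nonneg _
end

section
/- Let R be an integral domain that is not a field, and suppose there exists n such that every ideal of R is generated by at most n elements. Then R is Noetherian of Krull dimension 1. -/
open Ideal Submodule

section Aux

variable {R : Type*} [CommRing R]

/-- `topsUp m j P t`: `m ^ j` can be generated over `P` by at most `t` elements of `m ^ j`. -/
def topsUp (m : Ideal R) (j : ℕ) (P : Ideal R) (t : ℕ) : Prop :=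
  ∃ T : Finset R, T.card ≤ t ∧ (↑T : Set R) ⊆ (m ^ j : Ideal R) ∧
    m ^ j ≤ P ⊔ Ideal.span (↑T : Set R)

lemma topsUp_mono {m : Ideal R} {j : ℕ} {P P' : Ideal R} (h : P ≤ P') {t : ℕ}
    (ht : topsUp m j P t) : topsUp m j P' t := by
  obtain ⟨T, h1, h2, h3⟩ := ht
  exact ⟨T, h1, h2, h3.trans (sup_le_sup_right h _)⟩

/-- The exchange lemma: enlarging `P` strictly (inside the slice between `m^(j+1)` and `m^j`)
strictly decreases the number of elements needed to top up to `m ^ j`. -/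
lemma topsUp_exchange {m : Ideal R} (hm : m.IsMaximal) {j : ℕ} {P P' : Ideal R}
    (hP : m ^ (j + 1) ≤ P) (hPP' : P < P') (hP' : P' ≤ m ^ j) {t : ℕ}
    (ht : topsUp m j P t) : ∃ t' < t, topsUp m j P' t' := by
  classical
  obtain ⟨T, hTcard, hTsub, hTspan⟩ := ht
  obtain ⟨v, hvP', hvP⟩ := SetLike.exists_of_lt hPP'
  have hvmj : v ∈ m ^ j := hP' hvP'
  rcases Submodule.mem_sup.1 (hTspan hvmj) with ⟨u, huP, w, hw, huw⟩
  rcases mem_span_finset.1 hw with ⟨f, hf⟩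
  by_cases hall : ∀ i ∈ T, f i ∈ m
  · exfalso
    apply hvP
    have hwP : w ∈ m ^ (j + 1) := by
      rw [← hf.2]
      refine Submodule.sum_mem _ fun i hi => ?_
      rw [smul_eq_mul, pow_succ']
      exact Ideal.mul_mem_mul (hall i hi) (hTsub hi)
    rw [← huw]
    exact add_mem huP (hP hwP)
  · push_neg at hall
    obtain ⟨i₀, hi₀T, hfi₀⟩ := hall
    obtain ⟨b, z, hzm, hbz⟩ := hm.exists_inv hfi₀
    -- i₀ lies in P' ⊔ span (T.erase i₀)
    have hkey : i₀ ∈ P' ⊔ Ideal.span (↑(T.erase i₀) : Set R) := by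
      have h1 : f i₀ * i₀ = v - u - ∑ i ∈ T.erase i₀, f i * i := by
        have h := Finset.add_sum_erase T (fun i => f i • i) hi₀T
        rw [hf.2] at h
        simp only [smul_eq_mul] at h
        linear_combination h + huw
      have h2 : i₀ = b * (f i₀ * i₀) + z * i₀ := by
        have : (b * f i₀ + z) * i₀ = 1 * i₀ := by rw [hbz]
        rw [one_mul] at this
        linear_combination -this
      have hz : z * i₀ ∈ P' := by
        refine hPP'.le (hP ?_)
        rw [pow_succ']
        exact Ideal.mul_mem_mul hzm (hTsub hi₀T)
      have hv' : v ∈ P' ⊔ Ideal.span (↑(T.erase i₀) : Set R) :=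
        Submodule.mem_sup_left hvP'
      have hu' : u ∈ P' ⊔ Ideal.span (↑(T.erase i₀) : Set R) :=
        Submodule.mem_sup_left (hPP'.le huP)
      have hsum : (∑ i ∈ T.erase i₀, f i * i) ∈ P' ⊔ Ideal.span (↑(T.erase i₀) : Set R) := by
        refine Submodule.sum_mem _ fun i hi => Ideal.mul_mem_left _ _ ?_
        exact Submodule.mem_sup_right (Ideal.subset_span hi)
      have : (v - u - ∑ i ∈ T.erase i₀, f i * i) ∈ P' ⊔ Ideal.span (↑(T.erase i₀) : Set R) :=
        sub_mem (sub_mem hv' hu') hsum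
      have h3 : b * (v - u - ∑ i ∈ T.erase i₀, f i * i) + z * i₀ ∈
          P' ⊔ Ideal.span (↑(T.erase i₀) : Set R) :=
        add_mem (Ideal.mul_mem_left _ b this) (Submodule.mem_sup_left hz)
      rwa [← h1, ← h2] at h3
    refine ⟨(T.erase i₀).card, ?_, T.erase i₀, le_rfl, ?_, ?_⟩
    · have h1 : (T.erase i₀).card < T.card := Finset.card_erase_lt_of_mem hi₀T
      omega
    · exact fun a ha => hTsub (Finset.erase_subset _ _ ha)
    · refine hTspan.trans (sup_le (le_trans hPP'.le le_sup_left) ?_)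
      rw [Ideal.span_le]
      intro a ha
      by_cases hai : a = i₀
      · subst hai; exact hkey
      · exact SetLike.mem_coe.2 (Submodule.mem_sup_right
          (Ideal.subset_span (Finset.mem_coe.2 (Finset.mem_erase.2 ⟨hai, Finset.mem_coe.1 ha⟩))))

/-- Minimal number of elements needed to generate `m ^ j` over `P`. -/
noncomputable def rhoAux (m : Ideal R) (j : ℕ) (P : Ideal R) : ℕ :=
  sInf {t | topsUp m j P t}

section rho

variable {m : Ideal R} {n : ℕ}
  (hgen : ∀ I : Ideal R, ∃ s : Finset R, s.card ≤ n ∧ I = Ideal.span (s : Set R))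

include hgen

lemma topsUp_exists (m : Ideal R) (j : ℕ) (P : Ideal R) : topsUp m j P n := by
  obtain ⟨T, hTcard, hTspan⟩ := hgen (m ^ j)
  refine ⟨T, hTcard, ?_, ?_⟩
  · rw [hTspan]; exact Ideal.subset_span
  · rw [hTspan]; exact le_sup_right

lemma rhoAux_le (j : ℕ) (P : Ideal R) : rhoAux m j P ≤ n :=
  Nat.sInf_le (show topsUp m j P n from topsUp_exists hgen m j P)

lemma rhoAux_spec (j : ℕ) (P : Ideal R) : topsUp m j P (rhoAux m j P) :=
  Nat.sInf_mem (⟨n, show topsUp m j P n from topsUp_exists hgen m j P⟩ : {t | topsUp m j P t}.Nonempty)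

lemma rhoAux_antitone (j : ℕ) {P P' : Ideal R} (h : P ≤ P') :
    rhoAux m j P' ≤ rhoAux m j P :=
  Nat.sInf_le (topsUp_mono h (rhoAux_spec hgen j P))

lemma rhoAux_strict (hm : m.IsMaximal) {j : ℕ} {P P' : Ideal R}
    (hP : m ^ (j + 1) ≤ P) (hPP' : P < P') (hP' : P' ≤ m ^ j) :
    rhoAux m j P' < rhoAux m j P := by
  obtain ⟨t', ht', htops⟩ := topsUp_exchange hm hP hPP' hP' (rhoAux_spec hgen j P)
  exact lt_of_le_of_lt (Nat.sInf_le htops) ht'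

/-- The profile function: a strictly monotone `ℕ`-valued function on ideals above `m ^ K`. -/
noncomputable def PhiAux (m : Ideal R) (n K : ℕ) (N : Ideal R) : ℕ :=
  ∑ j ∈ Finset.range K, (n - rhoAux m j ((N ⊓ m ^ j) ⊔ m ^ (j + 1)))

omit hgen in
lemma PhiAux_le (K : ℕ) (N : Ideal R) : PhiAux m n K N ≤ n * K := by
  have : ∀ j ∈ Finset.range K, n - rhoAux m j ((N ⊓ m ^ j) ⊔ m ^ (j + 1)) ≤ n :=
    fun j _ => Nat.sub_le _ _
  calc PhiAux m n K N ≤ ∑ _j ∈ Finset.range K, n := Finset.sum_le_sum this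
    _ = n * K := by rw [Finset.sum_const, Finset.card_range, smul_eq_mul, mul_comm]

lemma PhiAux_strictMono (hm : m.IsMaximal) {K : ℕ} {N N' : Ideal R}
    (hNN' : N < N') (hN : m ^ K ≤ N) :
    PhiAux m n K N < PhiAux m n K N' := by
  have hmono : ∀ j ∈ Finset.range K,
      n - rhoAux m j ((N ⊓ m ^ j) ⊔ m ^ (j + 1)) ≤
        n - rhoAux m j ((N' ⊓ m ^ j) ⊔ m ^ (j + 1)) := by
    intro j _
    have h := rhoAux_antitone (m := m) hgen j (P := (N ⊓ m ^ j) ⊔ m ^ (j + 1))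
      (P' := (N' ⊓ m ^ j) ⊔ m ^ (j + 1))
      (sup_le_sup_right (inf_le_inf_right (m ^ j) hNN'.le) (m ^ (j + 1)))
    omega
  have hex : ∃ j ∈ Finset.range K,
      (N ⊓ m ^ j) ⊔ m ^ (j + 1) < (N' ⊓ m ^ j) ⊔ m ^ (j + 1) := by
    by_contra hno
    push_neg at hno
    have heq : ∀ j < K, (N' ⊓ m ^ j) ⊔ m ^ (j + 1) ≤ (N ⊓ m ^ j) ⊔ m ^ (j + 1) := by
      intro j hj
      have hle : (N ⊓ m ^ j) ⊔ m ^ (j + 1) ≤ (N' ⊓ m ^ j) ⊔ m ^ (j + 1) :=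
        sup_le_sup_right (inf_le_inf_right _ hNN'.le) _
      exact (lt_or_eq_of_le hle).elim
        (fun hlt => absurd hlt (hno j (Finset.mem_range.2 hj))) (fun h => h.ge)
    -- deduce N' ≤ N, contradiction
    have hstep : ∀ j ≤ K, N' ≤ N ⊔ m ^ j := by
      intro j hj
      induction j with
      | zero => rw [pow_zero, Ideal.one_eq_top]; exact le_trans le_top le_sup_right
      | succ i ih =>
        have hi : i ≤ K := Nat.le_of_succ_le hj
        have hih := ih hi
        intro v hv
        rcases Submodule.mem_sup.1 (hih hv) with ⟨u, hu, w, hw, huw⟩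
        have hwN' : w ∈ N' ⊓ m ^ i := by
          constructor
          · have : w = v - u := by rw [← huw]; ring
            rw [this]; exact sub_mem hv (hNN'.le hu)
          · exact hw
        have : w ∈ (N ⊓ m ^ i) ⊔ m ^ (i + 1) :=
          heq i (lt_of_lt_of_le (Nat.lt_of_succ_le hj) le_rfl) (Submodule.mem_sup_left hwN')
        rcases Submodule.mem_sup.1 this with ⟨a, ha, b, hb, hab⟩
        rw [← huw, ← hab]
        exact add_mem (Submodule.mem_sup_left hu)
          (add_mem (Submodule.mem_sup_left ha.1) (Submodule.mem_sup_right hb))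
    have : N' ≤ N := by
      have h1 := hstep K le_rfl
      rwa [sup_eq_left.2 hN] at h1
    exact hNN'.not_ge this
  obtain ⟨j, hjmem, hjlt⟩ := hex
  refine Finset.sum_lt_sum hmono ⟨j, hjmem, ?_⟩
  have h1 : rhoAux m j ((N' ⊓ m ^ j) ⊔ m ^ (j + 1)) < rhoAux m j ((N ⊓ m ^ j) ⊔ m ^ (j + 1)) := by
    refine rhoAux_strict (m := m) hgen hm le_sup_right hjlt ?_
    exact sup_le inf_le_right (Ideal.pow_le_pow_right (Nat.le_succ j))
  have h2 := rhoAux_le (m := m) hgen j ((N ⊓ m ^ j) ⊔ m ^ (j + 1))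
  omega

/-- Any strict chain of ideals above `m ^ K` has length at most `n * K`. -/
lemma chain_bound (hm : m.IsMaximal) (K r : ℕ) (g : ℕ → Ideal R)
    (hs : ∀ i < r, g i < g (i + 1)) (hK : ∀ i ≤ r, m ^ K ≤ g i) : r ≤ n * K := by
  have key : ∀ i ≤ r, i ≤ PhiAux m n K (g i) := by
    intro i hi
    induction i with
    | zero => exact Nat.zero_le _
    | succ i ih =>
      have h1 := ih (Nat.le_of_succ_le hi)
      have h2 : PhiAux m n K (g i) < PhiAux m n K (g (i + 1)) :=
        PhiAux_strictMono hgen hm (hs i (Nat.lt_of_succ_le hi)) (hK i (Nat.le_of_succ_le hi))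
      omega
  exact le_trans (key r le_rfl) (PhiAux_le (m := m) (n := n) K (g r))

end rho

end Aux

section Main

variable {R : Type*} [CommRing R] [IsDomain R] [IsNoetherianRing R]

set_option maxHeartbeats 1000000 in
/-- Key step: in a Noetherian domain in which every ideal needs at most `n` generators,
`m ^ k ≤ (x) + m ^ (k+1)` for some `k`, for any maximal `m` and `x ≠ 0`. -/
lemma key_step {n : ℕ}
    (hgen : ∀ I : Ideal R, ∃ s : Finset R, s.card ≤ n ∧ I = Ideal.span (s : Set R))
    {m : Ideal R} (hm : m.IsMaximal) {x : R} (hx0 : x ≠ 0) :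
    ∃ k : ℕ, m ^ k ≤ Ideal.span {x} ⊔ m ^ (k + 1) := by
  by_contra hbad
  push_neg at hbad
  have hstep : ∀ k : ℕ, Ideal.span {x} ⊔ m ^ (k + 1) < Ideal.span {x} ⊔ m ^ k := by
    intro k
    refine lt_of_le_of_ne (sup_le_sup_left (Ideal.pow_le_pow_right (Nat.le_succ k)) _) ?_
    intro heq
    exact hbad k (heq ▸ (le_sup_right : m ^ k ≤ Ideal.span {x} ⊔ m ^ k))
  -- Artin-Rees
  obtain ⟨c₀, hc₀⟩ := Ideal.exists_pow_inf_eq_pow_smul m (Ideal.span {x} : Ideal R)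
  set c := c₀ + 1 with hc
  -- the recursive construction of long chains
  have construct : ∀ t : ℕ, ∃ (r : ℕ) (g : ℕ → Ideal R),
      (∀ i < r, g i < g (i + 1)) ∧ (∀ i ≤ r, m ^ (t * c) ≤ g i) ∧ g r = ⊤ ∧
        c * (t * (t + 1)) ≤ 2 * r := by
    intro t
    induction t with
    | zero =>
      exact ⟨0, fun _ => ⊤, fun i hi => absurd hi (Nat.not_lt_zero i),
        fun i _ => le_top, rfl, by omega⟩
    | succ t ih =>
      obtain ⟨r, g, hstrict, hfloor, htop, hlen⟩ := ih
      set K := (t + 1) * c with hK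
      have hKc : K - c = t * c := by rw [hK, Nat.succ_mul, Nat.add_sub_cancel]
      have hcK : c ≤ K := by
        rw [hK]
        exact Nat.le_mul_of_pos_left c (by omega)
      have hKc₀ : c₀ ≤ K := by omega
      refine ⟨r + K, fun i => if i ≤ r then Ideal.span {x} * g i ⊔ m ^ K
        else Ideal.span {x} ⊔ m ^ (K - (i - r)), ?_, ?_, ?_, ?_⟩
      · -- strictness
        intro i hi
        by_cases h1 : i + 1 ≤ r
        · -- both in push regime
          have h0 : i ≤ r := by omega
          simp only [if_pos h0, if_pos h1]
          have hgi : g i < g (i + 1) := hstrict i (by omega)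
          have hfl : m ^ (t * c) ≤ g i := hfloor i h0
          refine lt_of_le_of_ne (sup_le_sup_right (Ideal.mul_mono_right hgi.le) _) ?_
          intro heqI
          obtain ⟨v, hvN', hvN⟩ := SetLike.exists_of_lt hgi
          have hxv : x * v ∈ Ideal.span {x} * g (i + 1) ⊔ m ^ K :=
            Submodule.mem_sup_left
              (Ideal.mul_mem_mul (Ideal.mem_span_singleton_self x) hvN')
          rw [← heqI] at hxv
          rcases Submodule.mem_sup.1 hxv with ⟨w, hw, u, hu, hwu⟩
          rcases Ideal.mem_span_singleton_mul.1 hw with ⟨b, hbN, hbw⟩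
          have hu2 : u ∈ m ^ K ⊓ Ideal.span {x} := by
            constructor
            · exact hu
            · have huxvb : u = x * (v - b) := by linear_combination hwu + hbw
              rw [huxvb]
              exact Ideal.mem_span_singleton'.2 ⟨v - b, by ring⟩
          -- Artin-Rees gives u = x * z with z ∈ m ^ (K - c₀)
          have hAR : m ^ K ⊓ Ideal.span {x} ≤ Ideal.span {x} * m ^ (K - c₀) := by
            have h := hc₀ K hKc₀
            have htop' : ∀ s : ℕ, (m ^ s • (⊤ : Ideal R) : Ideal R) = m ^ s := by
              intro s; rw [Ideal.smul_eq_mul, mul_top]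
            rw [htop'] at h
            calc m ^ K ⊓ Ideal.span {x}
                = m ^ (K - c₀) • (m ^ c₀ • (⊤ : Ideal R) ⊓ Ideal.span {x}) := h
              _ ≤ m ^ (K - c₀) • (Ideal.span {x}) := smul_mono_right _ inf_le_right
              _ = Ideal.span {x} * m ^ (K - c₀) := by
                  rw [Ideal.smul_eq_mul, mul_comm]
          rcases Ideal.mem_span_singleton_mul.1 (hAR hu2) with ⟨z, hz, hzu⟩
          have hzN : z ∈ g i := by
            refine hfl ?_
            have : m ^ (K - c₀) ≤ m ^ (t * c) := by
              rw [← hKc]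
              exact Ideal.pow_le_pow_right (by omega)
            exact this hz
          apply hvN
          have hcancel : v = b + z := by
            have hxeq : x * v = x * (b + z) := by linear_combination -hwu - hbw - hzu
            exact mul_left_cancel₀ hx0 hxeq
          rw [hcancel]
          exact add_mem hbN hzN
        · -- bridge regime
          have h0 : r ≤ i := by omega
          have hbr : ∀ j, r ≤ j → (if j ≤ r then Ideal.span {x} * g j ⊔ m ^ K
              else Ideal.span {x} ⊔ m ^ (K - (j - r))) = Ideal.span {x} ⊔ m ^ (K - (j - r)) := by
            intro j hj
            by_cases hjr : j ≤ r
            · have : j = r := le_antisymm hjr hj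
              subst this
              rw [if_pos le_rfl]
              rw [htop, mul_top]
              simp
            · rw [if_neg hjr]
          beta_reduce
          rw [hbr i h0, hbr (i + 1) (by omega)]
          have e1 : K - (i - r) = (K - (i + 1 - r)) + 1 := by omega
          rw [e1]
          exact hstep _
      · -- floor
        intro i _
        beta_reduce
        by_cases h0 : i ≤ r
        · rw [if_pos h0]; exact le_sup_right
        · rw [if_neg h0]
          refine le_trans (Ideal.pow_le_pow_right ?_) (le_sup_right :
            m ^ (K - (i - r)) ≤ _)
          omega
      · -- top
        beta_reduce
        rw [if_neg (by omega : ¬ r + K ≤ r)]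
        have : K - (r + K - r) = 0 := by omega
        rw [this, pow_zero, Ideal.one_eq_top, sup_top_eq]
      · -- length
        have : 2 * (r + K) = 2 * r + 2 * ((t + 1) * c) := by rw [hK]; ring
        rw [this]
        nlinarith [hlen]
  -- now derive the contradiction
  obtain ⟨r, g, hstrict, hfloor, _, hlen⟩ := construct (2 * n + 1)
  have hbound := chain_bound hgen hm ((2 * n + 1) * c) r g hstrict hfloor
  have hc1 : 1 ≤ c := by omega
  nlinarith [hlen, hbound]

/-- Collapse: a nonzero prime below a maximal ideal must contain it. -/
lemma prime_collapse {n : ℕ}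
    (hgen : ∀ I : Ideal R, ∃ s : Finset R, s.card ≤ n ∧ I = Ideal.span (s : Set R))
    {p m : Ideal R} (hp : p.IsPrime) (hm : m.IsMaximal) (hpm : p ≤ m)
    {x : R} (hx0 : x ≠ 0) (hxp : x ∈ p) : m ≤ p := by
  obtain ⟨k, hk⟩ := key_step hgen hm hx0
  -- Nakayama in R ⧸ (x)
  set I : Ideal R := Ideal.span {x} with hI
  set N : Submodule R (R ⧸ (I : Submodule R R)) :=
    Submodule.map (Submodule.mkQ (I : Submodule R R)) (m ^ k : Ideal R) with hN
  have hNle : N ≤ m • N := by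
    rw [hN, ← Submodule.map_smul'']
    have h1 : (m • (m ^ k : Ideal R) : Submodule R R) = ((m ^ (k + 1) : Ideal R) :
        Submodule R R) := by
      rw [Ideal.smul_eq_mul, ← pow_succ']
    rw [h1]
    intro y hy
    rcases Submodule.mem_map.1 hy with ⟨a, ha, hay⟩
    have ha2 : a ∈ Ideal.span {x} ⊔ m ^ (k + 1) := hk ha
    rcases Submodule.mem_sup.1 ha2 with ⟨u, hu, w, hw, huw⟩
    refine Submodule.mem_map.2 ⟨w, hw, ?_⟩
    rw [← hay, ← huw]
    have : Submodule.mkQ (I : Submodule R R) u = 0 := by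
      rw [Submodule.mkQ_apply, Submodule.Quotient.mk_eq_zero]
      exact hu
    rw [map_add, this, zero_add]
  have hNfg : N.FG := by
    refine Submodule.FG.map _ ?_
    exact (isNoetherian_def.1 inferInstance) _
  obtain ⟨rr, hrr1, hrr2⟩ :=
    Submodule.exists_sub_one_mem_and_smul_eq_zero_of_fg_of_le_smul m N hNfg hNle
  -- rr * m^k ⊆ (x) ⊆ p
  have hrmk : ∀ a ∈ (m ^ k : Ideal R), rr * a ∈ p := by
    intro a ha
    have h1 : rr • (Submodule.mkQ (I : Submodule R R) a) = 0 :=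
      hrr2 _ (Submodule.mem_map.2 ⟨a, ha, rfl⟩)
    have h2 : rr * a ∈ I := by
      have h3 : Submodule.mkQ (I : Submodule R R) (rr * a) = 0 := by
        rw [← smul_eq_mul, map_smul]
        exact h1
      rwa [Submodule.mkQ_apply, Submodule.Quotient.mk_eq_zero] at h3
    rw [hI] at h2
    exact (Ideal.span_singleton_le_iff_mem p).2 hxp h2
  have hrp : rr ∉ p := by
    intro hrp
    have h1 : rr - 1 ∈ m := hrr1
    have h2 : rr ∈ m := hpm hrp
    have : (1 : R) ∈ m := by
      have : (1 : R) = rr - (rr - 1) := by ring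
      rw [this]; exact sub_mem h2 h1
    exact hm.ne_top (Ideal.eq_top_of_isUnit_mem _ this isUnit_one)
  intro a ham
  have hak : a ^ k ∈ (m ^ k : Ideal R) := Ideal.pow_mem_pow ham k
  have h1 : rr * a ^ k ∈ p := hrmk _ hak
  rcases hp.mem_or_mem h1 with h | h
  · exact absurd h hrp
  · exact hp.mem_of_pow_mem _ h

end Main

/-- Cohen: An integral domain that is not a field, in which every ideal is
generated by at most `n` elements for some fixed `n`, is Noetherian of Krull dimension 1. -/
theorem stmt15 (R : Type*) [CommRing R] [IsDomain R] (hR : ¬ IsField R)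
    (h : ∃ n : ℕ, ∀ I : Ideal R, ∃ s : Finset R, s.card ≤ n ∧ I = Ideal.span (s : Set R)) :
    IsNoetherianRing R ∧ ringKrullDim R = 1 := by
  obtain ⟨n, hgen⟩ := h
  have hNoeth : IsNoetherianRing R := by
    rw [isNoetherianRing_iff_ideal_fg]
    intro I
    obtain ⟨s, _, hs⟩ := hgen I
    exact ⟨s, hs.symm⟩
  refine ⟨hNoeth, ?_⟩
  -- dim ≥ 1
  obtain ⟨I, hIbot, hItop⟩ := Ring.not_isField_iff_exists_ideal_bot_lt_and_lt_top.1 hR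
  obtain ⟨M, hM, hIM⟩ := Ideal.exists_le_maximal I hItop.ne
  have hMbot : (⊥ : Ideal R) < M := lt_of_lt_of_le hIbot hIM
  have hbotprime : (⊥ : Ideal R).IsPrime := Ideal.bot_prime
  have hdim_ge : 1 ≤ ringKrullDim R := by
    have hseries : ∃ p : LTSeries (PrimeSpectrum R), p.length = 1 := by
      refine ⟨(RelSeries.singleton _ ⟨⊥, hbotprime⟩).snoc ⟨M, hM.isPrime⟩ ?_, rfl⟩
      exact hMbot
    obtain ⟨p, hp⟩ := hseries
    have := Order.LTSeries.length_le_krullDim p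
    rw [hp] at this
    exact_mod_cast this
  -- dim ≤ 1
  have hdim_le : ringKrullDim R ≤ 1 := by
    have hlen : ∀ q : LTSeries (PrimeSpectrum R), q.length ≤ 1 := by
      intro q
      by_contra hq
      push_neg at hq
      have hq2 : 2 ≤ q.length := hq
      -- extract three primes
      have h01 : q.toFun ⟨0, by omega⟩ < q.toFun ⟨1, by omega⟩ :=
        q.strictMono (by simp [Fin.lt_def])
      have h12 : q.toFun ⟨1, by omega⟩ < q.toFun ⟨2, by omega⟩ :=
        q.strictMono (by simp [Fin.lt_def])
      set P0 := q.toFun ⟨0, by omega⟩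
      set P1 := q.toFun ⟨1, by omega⟩
      set P2 := q.toFun ⟨2, by omega⟩
      have h01' : P0.asIdeal < P1.asIdeal := h01
      have h12' : P1.asIdeal < P2.asIdeal := h12
      obtain ⟨x, hx1, hx0'⟩ := SetLike.exists_of_lt h01'
      have hx0 : x ≠ 0 := fun hx => hx0' (hx ▸ P0.asIdeal.zero_mem)
      obtain ⟨M', hM', hPM'⟩ := Ideal.exists_le_maximal P2.asIdeal P2.isPrime.ne_top
      have hcollapse : M' ≤ P1.asIdeal :=
        prime_collapse hgen P1.isPrime hM' (le_trans h12'.le hPM') hx0 hx1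
      exact absurd (lt_of_lt_of_le h12' (le_trans hPM' hcollapse)) (lt_irrefl _)
    rw [ringKrullDim, Order.krullDim_eq_iSup_length]
    have h1 : ((1 : WithBot ℕ∞)) = (((1 : ℕ∞)) : WithBot ℕ∞) := rfl
    rw [h1, WithBot.coe_le_coe]
    refine iSup_le fun q => ?_
    exact_mod_cast hlen q
  exact le_antisymm hdim_le hdim_ge
end

section
/- Let ∂ be a nonzero ℚ-linear derivation on ℚ_p and E = {a ∈ ℤ_p : ∂a ∈ ℤ_p}. Then E is not open in the p-adic topology on ℚ_p: every nonempty p-adically open subset of ℚ_p contains a point not in E. Consequently the E-adic topology on ℚ_p strictly refines the p-adic topology. -/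
/-- The basis of the `E`-adic topology on `ℚ_p` for a subset `E ⊆ ℚ_p`. -/
def adicBasis' {K : Type*} [Field K] (E : Set K) : Set (Set K) :=
  {U : Set K | ∃ α β : K, α ≠ 0 ∧ U = {x : K | ∃ r ∈ E, x = α * r + β}}

/-- For a nonzero ℚ-linear derivation `∂` on `ℚ_p` and
`E = {a ∈ ℤ_p : ∂a ∈ ℤ_p}`, the set `E` is not `p`-adically open (every nonempty
`p`-adically open set contains a point outside `E`), and the `E`-adic topology on `ℚ_p`
strictly refines the `p`-adic topology. -/
theorem stmt17 (p : ℕ) [Fact p.Prime] (D : ℚ_[p] → ℚ_[p])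
    (hadd : ∀ x y : ℚ_[p], D (x + y) = D x + D y)
    (hmul : ∀ x y : ℚ_[p], D (x * y) = x * D y + y * D x)
    (hQ : ∀ q : ℚ, D (q : ℚ_[p]) = 0)
    (hne : D ≠ 0) :
    (∀ U : Set ℚ_[p], IsOpen U → U.Nonempty →
      ∃ x ∈ U, ¬ (‖x‖ ≤ 1 ∧ ‖D x‖ ≤ 1)) ∧
    TopologicalSpace.generateFrom (adicBasis' {a : ℚ_[p] | ‖a‖ ≤ 1 ∧ ‖D a‖ ≤ 1})
      < (inferInstance : TopologicalSpace ℚ_[p]) := by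
  have hp : 1 < (p : ℝ) := by
    exact_mod_cast (Fact.out : p.Prime).one_lt
  have hD0 : D 0 = 0 := by simpa using hQ 0
  -- Part 1
  have part1 : ∀ U : Set ℚ_[p], IsOpen U → U.Nonempty →
      ∃ x ∈ U, ¬ (‖x‖ ≤ 1 ∧ ‖D x‖ ≤ 1) := by
    intro U hU hne'
    obtain ⟨x₀, hx₀⟩ := hne'
    by_contra hcon
    push_neg at hcon
    obtain ⟨ε, hε, hball⟩ := Metric.isOpen_iff.mp hU x₀ hx₀
    set C : ℝ := 1 + ‖D x₀‖ with hC
    have hC1 : (1 : ℝ) ≤ C := by simp [hC, norm_nonneg]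
    -- D is bounded by C on a small ball
    have hsmall : ∀ y : ℚ_[p], ‖y‖ < ε → ‖D y‖ ≤ C := by
      intro y hy
      have hmem : x₀ + y ∈ U := by
        apply hball
        simp [Metric.mem_ball, dist_eq_norm, hy]
      have h2 := (hcon _ hmem).2
      have hDy : D y = D (x₀ + y) - D x₀ := by rw [hadd]; ring
      calc ‖D y‖ ≤ ‖D (x₀ + y)‖ + ‖D x₀‖ := by rw [hDy]; exact norm_sub_le _ _
        _ ≤ 1 + ‖D x₀‖ := by linarith
    -- hence D is bounded everywhere
    have hall : ∀ x : ℚ_[p], ‖D x‖ ≤ C := by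
      intro x
      obtain ⟨q, hq⟩ := Padic.rat_dense p x hε
      have : D x = D (x - q) := by
        have : D (x - q + q) = D (x - q) + D q := hadd _ _
        simpa [hQ q] using this
      rw [this]
      exact hsmall _ hq
    -- but D is unbounded: take t with D t ≠ 0 and scale by rationals
    obtain ⟨t, ht⟩ := Function.ne_iff.mp hne
    have hDt : 0 < ‖D t‖ := norm_pos_iff.mpr ht
    obtain ⟨n, hn⟩ := pow_unbounded_of_one_lt (C / ‖D t‖) hp
    set q : ℚ := ((p : ℚ) ^ n)⁻¹ with hq
    have hqcast : (q : ℚ_[p]) = ((p : ℚ_[p]) ^ n)⁻¹ := by push_cast [hq]; ring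
    have hqnorm : ‖(q : ℚ_[p])‖ = (p : ℝ) ^ n := by
      rw [hqcast, norm_inv, norm_pow, Padic.norm_p, ← inv_pow, inv_inv]
    have hDqt : D ((q : ℚ_[p]) * t) = (q : ℚ_[p]) * D t := by
      rw [hmul, hQ]; ring
    have : ‖D ((q : ℚ_[p]) * t)‖ = (p : ℝ) ^ n * ‖D t‖ := by
      rw [hDqt, norm_mul, hqnorm]
    have hlt : C < ‖D ((q : ℚ_[p]) * t)‖ := by
      rw [this]
      calc C = C / ‖D t‖ * ‖D t‖ := by field_simp
        _ < (p : ℝ) ^ n * ‖D t‖ := by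
          exact mul_lt_mul_of_pos_right hn hDt
    exact absurd (hall _) (not_le.mpr hlt)
  set E : Set ℚ_[p] := {a : ℚ_[p] | ‖a‖ ≤ 1 ∧ ‖D a‖ ≤ 1} with hE
  have h0E : (0 : ℚ_[p]) ∈ E := by simp [hE, hD0]
  -- E is a basic open set of the E-adic topology
  have hEbasic : E ∈ adicBasis' E := by
    refine ⟨1, 0, one_ne_zero, ?_⟩
    ext x
    simp [adicBasis']
  -- the E-adic topology refines the p-adic topology
  have hle : TopologicalSpace.generateFrom (adicBasis' E)
      ≤ (inferInstance : TopologicalSpace ℚ_[p]) := by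
    rw [TopologicalSpace.le_def]
    intro U hU
    -- write U as a union of basic sets
    have hU' : U = ⋃₀ {V | V ∈ adicBasis' E ∧ V ⊆ U} := by
      ext y
      constructor
      · intro hy
        obtain ⟨ε, hε, hball⟩ := Metric.isOpen_iff.mp hU y hy
        obtain ⟨n, hn⟩ := pow_unbounded_of_one_lt ε⁻¹ hp
        have hpn : ((p : ℝ) ^ n)⁻¹ < ε := by
          rw [inv_lt_comm₀ (by positivity) hε]
          exact hn
        refine ⟨{x : ℚ_[p] | ∃ r ∈ E, x = (p : ℚ_[p]) ^ n * r + y}, ⟨⟨(p : ℚ_[p]) ^ n, y,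
          ?_, rfl⟩, ?_⟩, ⟨0, h0E, by ring⟩⟩
        · exact pow_ne_zero _ (Nat.cast_ne_zero.mpr (Fact.out : p.Prime).ne_zero)
        · rintro x ⟨r, hrE, rfl⟩
          apply hball
          rw [Metric.mem_ball, dist_eq_norm]
          have : ‖(p : ℚ_[p]) ^ n * r + y - y‖ = ‖(p : ℚ_[p])‖ ^ n * ‖r‖ := by
            rw [add_sub_cancel_right, norm_mul, norm_pow]
          rw [this, Padic.norm_p]
          calc ((p : ℝ)⁻¹) ^ n * ‖r‖ ≤ ((p : ℝ)⁻¹) ^ n * 1 := by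
                apply mul_le_mul_of_nonneg_left hrE.1 (by positivity)
            _ = ((p : ℝ) ^ n)⁻¹ := by rw [mul_one, inv_pow]
            _ < ε := hpn
      · rintro ⟨V, ⟨_, hVU⟩, hyV⟩
        exact hVU hyV
    rw [hU']
    exact TopologicalSpace.GenerateOpen.sUnion _ fun V hV =>
      TopologicalSpace.GenerateOpen.basic V hV.1
  refine ⟨part1, lt_of_le_of_ne hle ?_⟩
  intro heq
  have hEopen : IsOpen E := by
    have h1 : (TopologicalSpace.generateFrom (adicBasis' E)).IsOpen E :=
      TopologicalSpace.GenerateOpen.basic E hEbasic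
    rw [heq] at h1
    exact h1
  obtain ⟨x, hxE, hx⟩ := part1 E hEopen ⟨0, h0E⟩
  exact hx hxE
end

section
/- Let ∂ be a nonzero ℚ-linear derivation on ℚ_p and E = {a ∈ ℤ_p : ∂a ∈ ℤ_p}. The map τ : E → ℤ_p[x]/(x²) given by τ(a) = a + (∂a)x is an injective ring homomorphism whose image is dense (for the topology on ℤ_p[x]/(x²) induced by the product topology on ℤ_p²). -/
section aux

variable {p : ℕ} [Fact p.Prime] (D : ℚ_[p] → ℚ_[p])

theorem stmt18_dense
    (hadd : ∀ x y : ℚ_[p], D (x + y) = D x + D y)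
    (hmul : ∀ x y : ℚ_[p], D (x * y) = x * D y + y * D x)
    (hQ : ∀ q : ℚ, D (q : ℚ_[p]) = 0)
    (hne : D ≠ 0) (a b : ℚ_[p]) {ε : ℝ} (hε : 0 < ε) :
    ∃ x : ℚ_[p], ‖x - a‖ < ε ∧ ‖D x - b‖ < ε := by
  -- basic facts
  have hlin : ∀ (q : ℚ) (x : ℚ_[p]), D ((q : ℚ_[p]) * x) = (q : ℚ_[p]) * D x := by
    intro q x; rw [hmul, hQ]; ring
  -- some u with D u ≠ 0
  obtain ⟨u, hu⟩ : ∃ u, D u ≠ 0 := by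
    by_contra h; push_neg at h; exact hne (funext h)
  have hDu : (0:ℝ) < ‖D u‖ := norm_pos_iff.mpr hu
  -- rational s approximating b / D u
  obtain ⟨s, hs⟩ := Padic.rat_dense p (b / D u) (div_pos hε hDu)
  have hsDu : ‖(s : ℚ_[p]) * D u - b‖ < ε := by
    have : (s : ℚ_[p]) * D u - b = -((b / D u - s) * D u) := by
      field_simp; ring
    rw [this, norm_neg, norm_mul]
    calc ‖(b / D u - s : ℚ_[p])‖ * ‖D u‖ < (ε / ‖D u‖) * ‖D u‖ := by
          exact mul_lt_mul_of_pos_right hs hDu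
      _ = ε := div_mul_cancel₀ ε (ne_of_gt hDu)
  -- rational q approximating u
  have hpos : (0:ℝ) < ε / (‖(s : ℚ_[p])‖ + 1) := by positivity
  obtain ⟨q, hq⟩ := Padic.rat_dense p u hpos
  have hsuq : ‖(s : ℚ_[p]) * (u - q)‖ < ε := by
    rw [norm_mul]
    have h1 : ‖(s : ℚ_[p])‖ * ‖u - (q : ℚ_[p])‖ ≤ ‖(s : ℚ_[p])‖ * (ε / (‖(s : ℚ_[p])‖ + 1)) :=
      mul_le_mul_of_nonneg_left (le_of_lt hq) (norm_nonneg _)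
    have h2 : ‖(s : ℚ_[p])‖ * (ε / (‖(s : ℚ_[p])‖ + 1)) < ε := by
      have h3 : ‖(s : ℚ_[p])‖ * (ε / (‖(s : ℚ_[p])‖ + 1)) <
          (‖(s : ℚ_[p])‖ + 1) * (ε / (‖(s : ℚ_[p])‖ + 1)) :=
        mul_lt_mul_of_pos_right (by linarith) hpos
      have h4 : (‖(s : ℚ_[p])‖ + 1) * (ε / (‖(s : ℚ_[p])‖ + 1)) = ε := by
        field_simp
      linarith
    linarith
  -- rational r approximating a
  obtain ⟨r, hr⟩ := Padic.rat_dense p a hε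
  refine ⟨(s : ℚ_[p]) * (u - (q : ℚ_[p])) + (r : ℚ_[p]), ?_, ?_⟩
  · have : (s : ℚ_[p]) * (u - q) + r - a = (s : ℚ_[p]) * (u - q) + (a - r) * (-1) := by ring
    rw [this]
    refine lt_of_le_of_lt (Padic.nonarchimedean _ _) (max_lt hsuq ?_)
    rw [norm_mul]; simpa using hr
  · have hDx : D ((s : ℚ_[p]) * (u - q) + r) = (s : ℚ_[p]) * D u := by
    -- D(u - q) = D u since D q = 0
      have huq : D (u - (q : ℚ_[p])) = D u := by
        have := hadd (u - q) (q : ℚ_[p])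
        rw [hQ] at this
        simpa using this.symm
      rw [hadd, hQ, hlin, huq, add_zero]
    rw [hDx]; exact hsDu

end aux

/-- For a nonzero ℚ-linear derivation `∂` on `ℚ_p` and
`E = {a ∈ ℤ_p : ∂a ∈ ℤ_p}` (realized as a subring `S` of `ℚ_p`), the map
`τ : E → ℤ_p[x]/(x²)`, `τ(a) = a + (∂a)x`, is an injective ring homomorphism with dense
image (identifying `ℤ_p[x]/(x²)` with `ℤ_p²` via `a + bx ↦ (a, b)`). -/
theorem stmt18 (p : ℕ) [Fact p.Prime] (D : ℚ_[p] → ℚ_[p])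
    (hadd : ∀ x y : ℚ_[p], D (x + y) = D x + D y)
    (hmul : ∀ x y : ℚ_[p], D (x * y) = x * D y + y * D x)
    (hQ : ∀ q : ℚ, D (q : ℚ_[p]) = 0)
    (hne : D ≠ 0)
    (S : Subring ℚ_[p]) (hS : (S : Set ℚ_[p]) = {x : ℚ_[p] | ‖x‖ ≤ 1 ∧ ‖D x‖ ≤ 1}) :
    ∃ τ : S →+* DualNumber ℤ_[p],
      Function.Injective τ ∧
      (∀ a : S, ((TrivSqZeroExt.fst (τ a) : ℤ_[p]) : ℚ_[p]) = (a : ℚ_[p]) ∧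
        ((TrivSqZeroExt.snd (τ a) : ℤ_[p]) : ℚ_[p]) = D (a : ℚ_[p])) ∧
      DenseRange (fun a : S =>
        ((TrivSqZeroExt.fst (τ a), TrivSqZeroExt.snd (τ a)) : ℤ_[p] × ℤ_[p])) := by
  have hmem : ∀ a : S, ‖(a : ℚ_[p])‖ ≤ 1 ∧ ‖D (a : ℚ_[p])‖ ≤ 1 := by
    intro a
    have h := a.2
    rw [← SetLike.mem_coe, hS] at h
    exact h
  have hD1 : D 1 = 0 := by
    have h := hmul 1 1
    simp only [mul_one, one_mul] at h
    exact (left_eq_add.mp h)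
  have hD0 : D 0 = 0 := by
    have h := hadd 0 0
    simp only [add_zero] at h
    exact left_eq_add.mp h
  set f : S → DualNumber ℤ_[p] :=
    fun a => (⟨(a : ℚ_[p]), (hmem a).1⟩, ⟨D (a : ℚ_[p]), (hmem a).2⟩) with hf
  have hfst : ∀ a : S, ((TrivSqZeroExt.fst (f a) : ℤ_[p]) : ℚ_[p]) = (a : ℚ_[p]) := fun a => rfl
  have hsnd : ∀ a : S, ((TrivSqZeroExt.snd (f a) : ℤ_[p]) : ℚ_[p]) = D (a : ℚ_[p]) := fun a => rfl
  have τmap_one : f 1 = 1 := by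
    refine TrivSqZeroExt.ext ?_ ?_
    · refine Subtype.ext ?_
      show ((1:S):ℚ_[p]) = ((TrivSqZeroExt.fst (1 : DualNumber ℤ_[p]) : ℤ_[p]) : ℚ_[p])
      simp
    · refine Subtype.ext ?_
      show D ((1:S):ℚ_[p]) = ((TrivSqZeroExt.snd (1 : DualNumber ℤ_[p]) : ℤ_[p]) : ℚ_[p])
      simp [hD1]
  have τmap_mul : ∀ a b : S, f (a * b) = f a * f b := by
    intro a b
    refine TrivSqZeroExt.ext ?_ ?_
    · refine Subtype.ext ?_
      rw [TrivSqZeroExt.fst_mul]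
      push_cast
      rfl
    · refine Subtype.ext ?_
      rw [DualNumber.snd_mul]
      push_cast
      show D ((a:ℚ_[p]) * (b:ℚ_[p])) = (a:ℚ_[p]) * D (b:ℚ_[p]) + D (a:ℚ_[p]) * (b:ℚ_[p])
      rw [hmul]; ring
  have τmap_zero : f 0 = 0 := by
    refine TrivSqZeroExt.ext (Subtype.ext ?_) (Subtype.ext ?_)
    · show ((0:S):ℚ_[p]) = ((TrivSqZeroExt.fst (0 : DualNumber ℤ_[p]) : ℤ_[p]) : ℚ_[p])
      simp
    · show D ((0:S):ℚ_[p]) = ((TrivSqZeroExt.snd (0 : DualNumber ℤ_[p]) : ℤ_[p]) : ℚ_[p])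
      simp [hD0]
  have τmap_add : ∀ a b : S, f (a + b) = f a + f b := by
    intro a b
    refine TrivSqZeroExt.ext (Subtype.ext ?_) (Subtype.ext ?_)
    · rw [TrivSqZeroExt.fst_add]
      push_cast
      rfl
    · rw [TrivSqZeroExt.snd_add]
      push_cast
      show D ((a:ℚ_[p]) + (b:ℚ_[p])) = D (a:ℚ_[p]) + D (b:ℚ_[p])
      exact hadd _ _
  refine ⟨{ toFun := f, map_one' := τmap_one, map_mul' := τmap_mul,
            map_zero' := τmap_zero, map_add' := τmap_add }, ?_, ?_, ?_⟩
  · intro a b hab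
    have h1 : TrivSqZeroExt.fst (f a) = TrivSqZeroExt.fst (f b) := by
      exact congrArg TrivSqZeroExt.fst hab
    have : ((a : ℚ_[p])) = ((b : ℚ_[p])) := by
      have := congrArg (fun z : ℤ_[p] => (z : ℚ_[p])) h1
      simpa [hfst] using this
    exact Subtype.ext this
  · intro a
    exact ⟨hfst a, hsnd a⟩
  · rw [Metric.denseRange_iff]
    intro z r hr
    have hε : (0:ℝ) < min r 1 := lt_min hr one_pos
    obtain ⟨x, hx1, hx2⟩ := stmt18_dense D hadd hmul hQ hne ((z.1 : ℚ_[p])) ((z.2 : ℚ_[p])) hε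
    have hxr : ‖x - (z.1 : ℚ_[p])‖ < r := lt_of_lt_of_le hx1 (min_le_left _ _)
    have hDxr : ‖D x - (z.2 : ℚ_[p])‖ < r := lt_of_lt_of_le hx2 (min_le_left _ _)
    have hx1' : ‖x - (z.1 : ℚ_[p])‖ ≤ 1 := le_of_lt (lt_of_lt_of_le hx1 (min_le_right _ _))
    have hDx1' : ‖D x - (z.2 : ℚ_[p])‖ ≤ 1 := le_of_lt (lt_of_lt_of_le hx2 (min_le_right _ _))
    have hxS : x ∈ S := by
      rw [← SetLike.mem_coe, hS]
      constructor
      · have : x = (x - (z.1 : ℚ_[p])) + (z.1 : ℚ_[p]) := by ring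
        rw [this]
        exact le_trans (Padic.nonarchimedean _ _) (max_le hx1' z.1.2)
      · have : D x = (D x - (z.2 : ℚ_[p])) + (z.2 : ℚ_[p]) := by ring
        rw [this]
        exact le_trans (Padic.nonarchimedean _ _) (max_le hDx1' z.2.2)
    refine ⟨⟨x, hxS⟩, ?_⟩
    rw [Prod.dist_eq]
    refine max_lt ?_ ?_
    · rw [dist_eq_norm]
      show ‖((z.1 : ℚ_[p]) - x : ℚ_[p])‖ < r
      rwa [norm_sub_rev]
    · rw [dist_eq_norm]
      show ‖((z.2 : ℚ_[p]) - D x : ℚ_[p])‖ < r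
      rwa [norm_sub_rev]
end
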